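/- arXiv:0904.2814 — 7 statements merged into one kernel-verified Lean document; each statement's English description precedes it below -/
import Mathlib

section
/- Let n ≥ 2 and let u ∈ C²(B₁ ∖ {0}), where B₁ ⊂ ℝⁿ is the open unit ball centered at the origin. Assume λ₁(∇²u)(x) + λ₂(∇²u)(x) ≤ 0 for all x ∈ B₁ ∖ {0} and inf_{B₁ ∖ {0}} u > −∞. Then u satisfies condition (★) with radius r̄ = 1. -/
open Filter Metric Set MeasureTheory Topology

attribute [local instance] Matrix.normedAddCommGroup Matrix.normedSpace

noncomputable section

/-- The Hessian matrix `∇²u(x)` of `u : ℝⁿ → ℝ` at `x`. -/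
def hessianMatrix (n : ℕ) (u : EuclideanSpace ℝ (Fin n) → ℝ)
    (x : EuclideanSpace ℝ (Fin n)) : Matrix (Fin n) (Fin n) ℝ :=
  fun i j => iteratedFDeriv ℝ 2 u x ![EuclideanSpace.single i 1, EuclideanSpace.single j 1]

/-- The eigenvalues `λ₁(M) ≤ ⋯ ≤ λₙ(M)` of a real symmetric matrix `M`, in
nondecreasing order (junk value if `M` is not symmetric): `sortedEig n M i = λ_{i+1}(M)`. -/
def sortedEig (n : ℕ) (M : Matrix (Fin n) (Fin n) ℝ) : Fin n → ℝ :=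
  if hM : M.IsHermitian then hM.eigenvalues ∘ Tuple.sort hM.eigenvalues else 0

/-- `λ₁(M) + ⋯ + λ_k(M)`, the sum of the `k` smallest eigenvalues of `M`. -/
def sumLowEig (n k : ℕ) (M : Matrix (Fin n) (Fin n) ℝ) : ℝ :=
  ∑ i ∈ Finset.univ.filter fun i : Fin n => (i : ℕ) < k, sortedEig n M i

/-- Condition (★) with radius `rbar`: for every vector `V`, the function
`w(x) = u(x) + V·x` satisfies `inf_{B_r ∖ {0}} w = min_{∂B_r} w` for all `0 < r < rbar`
(the minimum on the sphere is attained and equals the infimum over the punctured ball). -/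
def StarCond (n : ℕ) (u : EuclideanSpace ℝ (Fin n) → ℝ) (rbar : ℝ) : Prop :=
  ∀ V : EuclideanSpace ℝ (Fin n), ∀ r : ℝ, 0 < r → r < rbar →
    IsLeast ((fun x => u x + (inner ℝ V x : ℝ)) '' sphere (0 : EuclideanSpace ℝ (Fin n)) r)
      (sInf ((fun x => u x + (inner ℝ V x : ℝ)) '' (ball (0 : EuclideanSpace ℝ (Fin n)) r \ {0})))

/-- The matrix `(∂G/∂M_ij)` of partial derivatives of a function `G` of a matrix variable. -/
def derivMatrix (n : ℕ) (G : Matrix (Fin n) (Fin n) ℝ → ℝ) (M : Matrix (Fin n) (Fin n) ℝ) :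
    Matrix (Fin n) (Fin n) ℝ :=
  fun i j => fderiv ℝ G M (Matrix.single i j 1)

/-- 1-D second derivative test at a local minimum. -/
lemma aux_sdt {g g₁ : ℝ → ℝ} {c : ℝ}
    (hd : ∀ᶠ t in 𝓝 (0:ℝ), HasDerivAt g (g₁ t) t)
    (hd2 : HasDerivAt g₁ c 0) (hmin : IsLocalMin g 0) : 0 ≤ c := by
  by_contra hc
  push_neg at hc
  have hg10 : g₁ 0 = 0 := by
    have h0 : deriv g 0 = g₁ 0 := hd.self_of_nhds.deriv
    rw [← h0, hmin.deriv_eq_zero]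
  -- slope of g₁ tends to c < 0
  have hslope : Tendsto (slope g₁ 0) (𝓝[≠] (0:ℝ)) (𝓝 c) :=
    hasDerivAt_iff_tendsto_slope.1 hd2
  have hev : ∀ᶠ t in 𝓝[≠] (0:ℝ), slope g₁ 0 t < c / 2 :=
    hslope.eventually_lt_const (by linarith)
  rw [eventually_nhdsWithin_iff] at hev
  -- get η > 0 with properties
  obtain ⟨η₁, hη₁, hsl'⟩ := Metric.eventually_nhds_iff.1 hev
  have hsl : ∀ t, dist t 0 < η₁ → t ≠ 0 → slope g₁ 0 t < c/2 := fun t h1 h2 => hsl' h1 h2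
  obtain ⟨η₂, hη₂, hdball⟩ := Metric.eventually_nhds_iff.1 hd
  set η := min η₁ η₂ with hη
  have hηpos : 0 < η := lt_min hη₁ hη₂
  -- on (0, η), g₁ t < 0
  have hneg : ∀ t ∈ Ioo (0:ℝ) η, g₁ t < 0 := by
    intro t ht
    have h1 : slope g₁ 0 t < c / 2 := by
      apply hsl
      · simp [Real.dist_eq, abs_of_pos ht.1]; exact lt_of_lt_of_le ht.2 (min_le_left _ _)
      · exact ne_of_gt ht.1
    rw [slope_def_field, hg10] at h1
    have : (g₁ t - 0) / (t - 0) < c / 2 := by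
      simpa [div_eq_iff, sub_eq_iff_eq_add] using h1
    have h2 : g₁ t / t < c / 2 := by simpa using this
    have := (div_lt_iff₀ ht.1).1 h2
    nlinarith [ht.1]
  -- g is strictly decreasing on [0, η/2]
  have hcont : ContinuousOn g (Icc 0 (η/2)) := by
    intro t ht
    have : HasDerivAt g (g₁ t) t := by
      apply hdball
      simp only [Real.dist_eq, sub_zero]
      have := ht.1; have := ht.2
      rw [abs_of_nonneg ht.1]
      calc t ≤ η/2 := ht.2
        _ < η := by linarith
        _ ≤ η₂ := min_le_right _ _
    exact this.continuousAt.continuousWithinAt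
  have hanti : StrictAntiOn g (Icc 0 (η/2)) := by
    apply strictAntiOn_of_deriv_neg (convex_Icc _ _) hcont
    intro t ht
    rw [interior_Icc] at ht
    have hdt : HasDerivAt g (g₁ t) t := by
      apply hdball
      rw [Real.dist_eq, sub_zero, abs_of_pos ht.1]
      calc t < η/2 := ht.2
        _ < η := by linarith
        _ ≤ η₂ := min_le_right _ _
    rw [hdt.deriv]
    exact hneg t ⟨ht.1, by linarith [ht.2]⟩
  -- contradiction with local min
  obtain ⟨η₃, hη₃, hminb⟩ := Metric.eventually_nhds_iff.1 hmin
  set t := min (η/2) (η₃/2) with htdef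
  have htpos : 0 < t := lt_min (by linarith) (by linarith)
  have h1 : g t < g 0 := hanti ⟨le_rfl, by positivity⟩ ⟨le_of_lt htpos, min_le_left _ _⟩ htpos
  have h2 : g 0 ≤ g t := by
    apply hminb
    rw [Real.dist_eq, sub_zero, abs_of_pos htpos]
    calc t ≤ η₃/2 := min_le_right _ _
      _ < η₃ := by linarith
  linarith

/-- For a `C²` function, first and second derivatives along a line. -/
lemma aux_line {E : Type*} [NormedAddCommGroup E] [NormedSpace ℝ E] {u : E → ℝ} {x₀ : E} (e : E) (hu : ContDiffAt ℝ 2 u x₀) :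
    (∀ᶠ t in 𝓝 (0:ℝ), HasDerivAt (fun s : ℝ => u (x₀ + s • e))
      (fderiv ℝ u (x₀ + t • e) e) t) ∧
    HasDerivAt (fun t : ℝ => fderiv ℝ u (x₀ + t • e) e)
      (fderiv ℝ (fderiv ℝ u) x₀ e e) 0 := by
  obtain ⟨s, hs, hus⟩ : ∃ s ∈ 𝓝 x₀, ContDiffOn ℝ 2 u s :=
    hu.contDiffOn le_rfl (by simp)
  obtain ⟨U, hUs, hUopen, hx₀U⟩ := _root_.mem_nhds_iff.1 hs
  have hC2 : ∀ x ∈ U, ContDiffAt ℝ 2 u x := fun x hx =>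
    ((hus.mono hUs) x hx).contDiffAt (hUopen.mem_nhds hx)
  have hline : Continuous (fun t : ℝ => x₀ + t • e) := by continuity
  have hmem : ∀ᶠ t in 𝓝 (0:ℝ), x₀ + t • e ∈ U := by
    have : (fun t : ℝ => x₀ + t • e) 0 = x₀ := by simp
    exact hline.continuousAt.eventually_mem (this ▸ hUopen.mem_nhds (by simpa using hx₀U))
  have hlined : ∀ t : ℝ, HasDerivAt (fun s : ℝ => x₀ + s • e) e t := fun t => by
    simpa using ((hasDerivAt_id t).smul_const e).const_add x₀
  constructor
  · filter_upwards [hmem] with t ht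
    have hdiff : DifferentiableAt ℝ u (x₀ + t • e) :=
      (hC2 _ ht).differentiableAt two_ne_zero
    exact hdiff.hasFDerivAt.comp_hasDerivAt t (hlined t)
  · have hfd : DifferentiableAt ℝ (fderiv ℝ u) x₀ :=
      (hu.fderiv_right (m := 1) le_rfl).differentiableAt one_ne_zero
    have h1 : HasDerivAt (fun t : ℝ => fderiv ℝ u (x₀ + t • e))
        (fderiv ℝ (fderiv ℝ u) x₀ e) 0 := by
      have hfd' : HasFDerivAt (fderiv ℝ u) (fderiv ℝ (fderiv ℝ u) x₀)
          ((fun t : ℝ => x₀ + t • e) 0) := by simpa using hfd.hasFDerivAt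
      exact hfd'.comp_hasDerivAt 0 (hlined 0)
    have h2 := (ContinuousLinearMap.apply ℝ ℝ e).hasFDerivAt.comp_hasDerivAt 0 h1
    exact h2

lemma aux_single_sum {n : ℕ} (y : EuclideanSpace ℝ (Fin n)) :
    y = ∑ i, y i • EuclideanSpace.single i (1:ℝ) := by
  ext j
  have : (∑ i, y i • EuclideanSpace.single i (1:ℝ)) j
      = ∑ i, (y i • EuclideanSpace.single i (1:ℝ)) j := by
    simp only [WithLp.ofLp_sum, Finset.sum_apply]
  rw [this]
  simp [EuclideanSpace.single_apply]

lemma aux_bilinear {n : ℕ}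
    (H : EuclideanSpace ℝ (Fin n) →L[ℝ] EuclideanSpace ℝ (Fin n) →L[ℝ] ℝ)
    (y : EuclideanSpace ℝ (Fin n)) :
    H y y = ∑ i, ∑ j, y i * y j *
      H (EuclideanSpace.single i (1:ℝ)) (EuclideanSpace.single j (1:ℝ)) := by
  conv_lhs => rw [aux_single_sum y]
  simp only [_root_.map_sum, _root_.map_smul, ContinuousLinearMap.coe_sum', Finset.sum_apply,
    ContinuousLinearMap.smul_apply, smul_eq_mul]
  rw [Finset.sum_comm]
  refine Finset.sum_congr rfl fun i _ => ?_
  rw [Finset.mul_sum]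
  exact Finset.sum_congr rfl fun j _ => by ring

lemma aux_hessian_eq {n : ℕ} {u : EuclideanSpace ℝ (Fin n) → ℝ}
    {x : EuclideanSpace ℝ (Fin n)} (i j : Fin n) :
    hessianMatrix n u x i j = fderiv ℝ (fderiv ℝ u) x
      (EuclideanSpace.single i (1:ℝ)) (EuclideanSpace.single j (1:ℝ)) := by
  rw [hessianMatrix, iteratedFDeriv_two_apply]
  rfl

lemma aux_hermitian {n : ℕ} {u : EuclideanSpace ℝ (Fin n) → ℝ}
    {x : EuclideanSpace ℝ (Fin n)} (hu : ContDiffAt ℝ 2 u x) :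
    (hessianMatrix n u x).IsHermitian := by
  have hsymm := hu.isSymmSndFDerivAt (by norm_num)
  ext i j
  rw [Matrix.conjTranspose_apply, star_trivial, aux_hessian_eq, aux_hessian_eq]
  exact hsymm _ _

/-- quadratic form value at an eigenvector. -/
lemma aux_eigen_quad {n : ℕ} {u : EuclideanSpace ℝ (Fin n) → ℝ}
    {x : EuclideanSpace ℝ (Fin n)} (hu : ContDiffAt ℝ 2 u x)
    (hA : (hessianMatrix n u x).IsHermitian) (i : Fin n) :
    fderiv ℝ (fderiv ℝ u) x (hA.eigenvectorBasis i) (hA.eigenvectorBasis i)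
      = hA.eigenvalues i := by
  set e := hA.eigenvectorBasis i with he
  have h1 : fderiv ℝ (fderiv ℝ u) x e e
      = ∑ j, ∑ k, e j * e k * hessianMatrix n u x j k := by
    rw [aux_bilinear]
    exact Finset.sum_congr rfl fun j _ => Finset.sum_congr rfl fun k _ => by
      rw [aux_hessian_eq]
  have hmv := hA.mulVec_eigenvectorBasis i
  have hmv' : ∀ j, (hessianMatrix n u x).mulVec (fun k => e k) j
      = hA.eigenvalues i * e j := by
    intro j
    have := congrFun hmv j
    simpa [WithLp.equiv] using this
  have hnorm : ∑ j, e j * e j = 1 := by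
    have h2 : (inner ℝ e e : ℝ) = 1 := by
      have hno := hA.eigenvectorBasis.orthonormal.1 i
      rw [← he] at hno
      rw [real_inner_self_eq_norm_sq, hno]
      norm_num
    rw [← h2, PiLp.inner_apply]
    simp [RCLike.inner_apply, sq]
  rw [h1]
  have : ∀ j, ∑ k, e j * e k * hessianMatrix n u x j k
      = e j * (hA.eigenvalues i * e j) := by
    intro j
    rw [← hmv' j, Matrix.mulVec, dotProduct]
    rw [Finset.mul_sum]
    exact Finset.sum_congr rfl fun k _ => by ring
  rw [Finset.sum_congr rfl fun j _ => this j]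
  have : ∑ j, e j * (hA.eigenvalues i * e j) = hA.eigenvalues i * ∑ j, e j * e j := by
    rw [Finset.mul_sum]; exact Finset.sum_congr rfl fun j _ => by ring
  rw [this, hnorm, mul_one]

lemma aux_two_indices {n : ℕ} (hn : 2 ≤ n) {A : Matrix (Fin n) (Fin n) ℝ}
    (hA : A.IsHermitian) (hsum : sumLowEig n 2 A ≤ 0) :
    ∃ i j : Fin n, i ≠ j ∧ hA.eigenvalues i + hA.eigenvalues j ≤ 0 := by
  have h0 : 0 < n := by omega
  have h1 : 1 < n := by omega
  rw [sumLowEig] at hsum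
  simp only [sortedEig, dif_pos hA] at hsum
  have hfil : (Finset.univ.filter fun i : Fin n => (i : ℕ) < 2)
      = {(⟨0, h0⟩ : Fin n), ⟨1, h1⟩} := by
    ext i
    simp [Fin.ext_iff]
    omega
  rw [hfil, Finset.sum_pair (by simp [Fin.ext_iff])] at hsum
  exact ⟨Tuple.sort hA.eigenvalues ⟨0, h0⟩, Tuple.sort hA.eigenvalues ⟨1, h1⟩,
    (Tuple.sort hA.eigenvalues).injective.ne (by simp [Fin.ext_iff]), hsum⟩

lemma aux_bessel {n : ℕ} (b : OrthonormalBasis (Fin n) ℝ (EuclideanSpace ℝ (Fin n)))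
    (x : EuclideanSpace ℝ (Fin n)) {i j : Fin n} (hij : i ≠ j) :
    (inner ℝ (b i) x : ℝ)^2 + (inner ℝ (b j) x : ℝ)^2 ≤ ‖x‖^2 := by
  have hnorm : ∑ k, (b.repr x k)^2 = ‖x‖^2 := by
    have h1 : ‖b.repr x‖ = ‖x‖ := b.repr.norm_map x
    rw [← h1, EuclideanSpace.norm_eq]
    rw [Real.sq_sqrt (by positivity)]
    exact Finset.sum_congr rfl fun k _ => by
      rw [Real.norm_eq_abs, sq_abs]
  have h2 : (inner ℝ (b i) x : ℝ)^2 + (inner ℝ (b j) x : ℝ)^2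
      = ∑ k ∈ ({i, j} : Finset (Fin n)), (b.repr x k)^2 := by
    rw [Finset.sum_pair hij, b.repr_apply_apply, b.repr_apply_apply]
  rw [h2, ← hnorm]
  exact Finset.sum_le_univ_sum_of_nonneg fun k => sq_nonneg _

lemma aux_H1 {s : ℝ} (h0 : 0 < s) (h1 : s < 1) :
    HasDerivAt (fun z => Real.log (-Real.log z)) (s⁻¹ / Real.log s) s := by
  have hlog : Real.log s < 0 := Real.log_neg h0 h1
  have h := ((Real.hasDerivAt_log h0.ne').neg).log (by simpa using hlog.ne)
  simpa [neg_div_neg_eq] using h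

lemma aux_H2 {s : ℝ} (h0 : 0 < s) (h1 : s < 1) :
    HasDerivAt (fun z : ℝ => z⁻¹ / Real.log z)
      (-(s^2)⁻¹ * (Real.log s)⁻¹ + s⁻¹ * (-s⁻¹ / (Real.log s)^2)) s := by
  have hlog : Real.log s < 0 := Real.log_neg h0 h1
  have h : HasDerivAt (fun z => z⁻¹ * (Real.log z)⁻¹) _ s :=
    (hasDerivAt_inv h0.ne').mul ((Real.hasDerivAt_log h0.ne').inv hlog.ne)
  simpa [div_eq_mul_inv] using h

lemma aux_keyneg {q sp : ℝ} (hq0 : 0 < q) (hq1 : q < 1) (hsp0 : 0 ≤ sp) (hspq : sp ≤ q) :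
    sp * (-(q^2)⁻¹ * (Real.log q)⁻¹ + q⁻¹ * (-q⁻¹ / (Real.log q)^2))
      + q⁻¹ / Real.log q < 0 := by
  have hLneg : Real.log q < 0 := Real.log_neg hq0 hq1
  obtain ⟨L, hLdef⟩ : ∃ L, Real.log q = L := ⟨_, rfl⟩
  rw [hLdef] at hLneg ⊢
  have hqne : q ≠ 0 := hq0.ne'
  simp only [div_eq_mul_inv]
  have hexp : -(q^2)⁻¹ * L⁻¹ + q⁻¹ * (-q⁻¹ * (L^2)⁻¹)
      = -(q⁻¹*q⁻¹*L⁻¹) - q⁻¹*q⁻¹*(L⁻¹*L⁻¹) := by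
    rw [sq, sq, mul_inv, mul_inv]; ring
  rw [hexp]
  set a := q⁻¹ with hadef
  set b := L⁻¹ with hbdef
  have ha : 0 < a := inv_pos.2 hq0
  have hb : b < 0 := inv_lt_zero.2 hLneg
  have hqa : q * a = 1 := mul_inv_cancel₀ hqne
  rcases le_or_gt (-(a*a*b) - a*a*(b*b)) 0 with h | h
  · linarith [mul_nonneg hsp0 (neg_nonneg.2 h), mul_neg_of_pos_of_neg ha hb]
  · have h1 : sp * (-(a*a*b) - a*a*(b*b)) ≤ q * (-(a*a*b) - a*a*(b*b)) :=
      mul_le_mul_of_nonneg_right hspq h.le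
    have h2 : q * (-(a*a*b) - a*a*(b*b)) + a * b = -(a*(b*b)) := by
      have hh : q * (-(a*a*b) - a*a*(b*b)) + a * b
          = -((q*a)*(a*b)) - (q*a)*(a*(b*b)) + a*b := by ring
      rw [hh, hqa]; ring
    linarith [h1, mul_pos ha (mul_pos_of_neg_of_neg hb hb)]

lemma aux_eps (T ν : ℝ) (hν : 0 < ν) :
    ∃ ε : ℝ, 0 < ε ∧ ε < ν ∧ T < Real.log (-Real.log (ε^2)) := by
  set ε := min (ν/2) (Real.exp (-Real.exp T)/2) with hε
  have hexp : 0 < Real.exp (-Real.exp T) := Real.exp_pos _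
  have hε0 : 0 < ε := lt_min (by linarith) (by linarith)
  have hεle : ε ≤ Real.exp (-Real.exp T)/2 := min_le_right _ _
  have hexple : Real.exp (-Real.exp T) ≤ 1 := by
    rw [Real.exp_le_one_iff]
    have := Real.exp_pos T
    linarith
  have hε1 : ε < 1 := by
    calc ε ≤ Real.exp (-Real.exp T)/2 := hεle
      _ < 1 := by linarith
  have hsq : ε^2 < Real.exp (-Real.exp T) := by
    calc ε^2 = ε * ε := sq ε
      _ ≤ ε * 1 := by nlinarith
      _ = ε := mul_one ε
      _ ≤ Real.exp (-Real.exp T)/2 := hεle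
      _ < Real.exp (-Real.exp T) := by linarith
  have hlog : Real.log (ε^2) < -Real.exp T := by
    calc Real.log (ε^2) < Real.log (Real.exp (-Real.exp T)) :=
          Real.log_lt_log (by positivity) hsq
      _ = -Real.exp T := Real.log_exp _
  have hpos : Real.exp T < -Real.log (ε^2) := by linarith
  refine ⟨ε, hε0, ?_, ?_⟩
  · calc ε ≤ ν/2 := min_le_left _ _
      _ < ν := by linarith
  · rw [Real.lt_log_iff_exp_lt (by linarith [Real.exp_pos T])]
    exact hpos

set_option maxHeartbeats 2000000 in
/-- Lemma 1.1: if `λ₁(∇²u) + λ₂(∇²u) ≤ 0` on the punctured unit ball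
and `u` is bounded below there, then `u` satisfies condition (★) with radius `1`. -/
theorem stmt_1 (n : ℕ) (hn : 2 ≤ n) (u : EuclideanSpace ℝ (Fin n) → ℝ)
    (hu : ContDiffOn ℝ 2 u (ball (0 : EuclideanSpace ℝ (Fin n)) 1 \ {0}))
    (hEig : ∀ x ∈ ball (0 : EuclideanSpace ℝ (Fin n)) 1 \ {0},
      sumLowEig n 2 (hessianMatrix n u x) ≤ 0)
    (hbdd : BddBelow (u '' (ball (0 : EuclideanSpace ℝ (Fin n)) 1 \ {0}))) :
    StarCond n u 1 := by
  intro V r hr hr1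
  classical
  haveI : Nontrivial (EuclideanSpace ℝ (Fin n)) := by
    refine ⟨⟨EuclideanSpace.single ⟨0, by omega⟩ (1:ℝ), 0, fun h => ?_⟩⟩
    have h2 := congrArg (fun z : EuclideanSpace ℝ (Fin n) => ‖z‖) h
    simp [EuclideanSpace.norm_single] at h2
  set w : EuclideanSpace ℝ (Fin n) → ℝ := fun x => u x + (inner ℝ V x : ℝ) with hwdef
  set D : Set (EuclideanSpace ℝ (Fin n)) := ball 0 1 \ {0} with hDdef
  have hD_open : IsOpen D := isOpen_ball.sdiff isClosed_singleton
  have hC2 : ∀ x ∈ D, ContDiffAt ℝ 2 u x := fun x hx => hu.contDiffAt (hD_open.mem_nhds hx)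
  have hwc : ∀ x ∈ D, ContinuousAt w x := fun x hx =>
    (hC2 x hx).continuousAt.add (continuous_const.inner continuous_id).continuousAt
  have hsub1 : sphere (0 : EuclideanSpace ℝ (Fin n)) r ⊆ D := by
    intro x hx
    rw [mem_sphere_zero_iff_norm] at hx
    refine ⟨mem_ball_zero_iff.2 (by rw [hx]; exact hr1), ?_⟩
    simp only [mem_singleton_iff]
    intro h0
    rw [h0, norm_zero] at hx
    exact hr.ne hx
  have hsub2 : ball (0 : EuclideanSpace ℝ (Fin n)) r \ {0} ⊆ D := by
    rintro x ⟨hx1, hx2⟩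
    exact ⟨mem_ball_zero_iff.2 (lt_trans (mem_ball_zero_iff.1 hx1) hr1), hx2⟩
  obtain ⟨xs, hxs_mem, hxs_min⟩ :=
    (isCompact_sphere (0 : EuclideanSpace ℝ (Fin n)) r).exists_isMinOn
      ((NormedSpace.sphere_nonempty).2 hr.le)
      (fun x hx => (hwc x (hsub1 hx)).continuousWithinAt)
  have hxs_norm : ‖xs‖ = r := mem_sphere_zero_iff_norm.1 hxs_mem
  have hxsne : xs ≠ 0 := by
    intro h
    rw [h, norm_zero] at hxs_norm
    exact hr.ne' hxs_norm.symm
  have key : ∀ y ∈ ball (0 : EuclideanSpace ℝ (Fin n)) r \ {0}, w xs ≤ w y := by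
    obtain ⟨cu, hcu⟩ := hbdd
    have hwlb : ∀ x ∈ D, cu - ‖V‖ ≤ w x := by
      intro x hx
      have h1 : cu ≤ u x := hcu (mem_image_of_mem u hx)
      have h2 := abs_real_inner_le_norm V x
      have h3 : ‖x‖ ≤ 1 := le_of_lt (mem_ball_zero_iff.1 hx.1)
      have h4 : ‖V‖ * ‖x‖ ≤ ‖V‖ * 1 := mul_le_mul_of_nonneg_left h3 (norm_nonneg V)
      have h5 := (abs_le.1 h2).1
      have h6 : w x = u x + (inner ℝ V x : ℝ) := rfl
      rw [h6]
      linarith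
    set φ : EuclideanSpace ℝ (Fin n) → ℝ := fun x => Real.log (-Real.log (‖x‖^2)) with hφdef
    set cr : ℝ := Real.log (-Real.log (r^2)) with hcrdef
    intro y hy
    have hyD : y ∈ D := hsub2 hy
    have hyne : y ≠ 0 := fun h => hy.2 (by simp [h])
    have hynorm_pos : 0 < ‖y‖ := norm_pos_iff.2 hyne
    have hyr : ‖y‖ < r := mem_ball_zero_iff.1 hy.1
    have main : ∀ δ : ℝ, 0 < δ → w xs + δ * cr ≤ w y + δ * φ y := by
      intro δ hδ
      set T : ℝ := (w y + δ * φ y - (cu - ‖V‖)) / δ with hTdef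
      obtain ⟨ε, hε0, hεy, hεT⟩ := aux_eps T ‖y‖ hynorm_pos
      have hεr : ε < r := lt_trans hεy hyr
      have hε1 : ε < 1 := lt_trans hεr hr1
      set K : Set (EuclideanSpace ℝ (Fin n)) := closedBall 0 r \ ball 0 ε with hKdef
      have hKD : K ⊆ D := by
        rintro x ⟨hx1, hx2⟩
        refine ⟨mem_ball_zero_iff.2 (lt_of_le_of_lt (mem_closedBall_zero_iff.1 hx1) hr1), ?_⟩
        simp only [mem_singleton_iff]
        intro h0
        exact hx2 (by rw [h0]; exact mem_ball_zero_iff.2 (by simpa using hε0))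
      have hKcomp : IsCompact K := (isCompact_closedBall _ _).diff isOpen_ball
      have hyK : y ∈ K := ⟨mem_closedBall_zero_iff.2 hyr.le,
        fun h => absurd (mem_ball_zero_iff.1 h) (not_lt.2 hεy.le)⟩
      set vδ : EuclideanSpace ℝ (Fin n) → ℝ := fun x => w x + δ * φ x with hvdef
      have hφc : ∀ x ∈ K, ContinuousAt φ x := by
        intro x hx
        have hxn : 0 < ‖x‖ := lt_of_lt_of_le hε0 (not_lt.1 fun h => hx.2 (mem_ball_zero_iff.2 h))
        have hx1' : ‖x‖ < 1 := lt_of_le_of_lt (mem_closedBall_zero_iff.1 hx.1) hr1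
        have hq0 : (0:ℝ) < ‖x‖^2 := by positivity
        have hq1 : ‖x‖^2 < 1 := by nlinarith
        have hlog : Real.log (‖x‖^2) < 0 := Real.log_neg hq0 hq1
        have c1 : ContinuousAt (fun z : EuclideanSpace ℝ (Fin n) => ‖z‖^2) x :=
          ((continuous_norm).pow 2).continuousAt
        have c2 : ContinuousAt (fun s : ℝ => Real.log (-Real.log s)) (‖x‖^2) := by
          have l2 : ContinuousAt (fun s : ℝ => -Real.log s) (‖x‖^2) :=
            (Real.continuousAt_log hq0.ne').neg
          have l3 : ContinuousAt Real.log (-Real.log (‖x‖^2)) :=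
            Real.continuousAt_log (by linarith)
          exact ContinuousAt.comp (g := Real.log) (f := fun s : ℝ => -Real.log s) l3 l2
        exact ContinuousAt.comp (g := fun s : ℝ => Real.log (-Real.log s))
          (f := fun z : EuclideanSpace ℝ (Fin n) => ‖z‖^2) c2 c1
      have hvc : ContinuousOn vδ K := fun x hx =>
        ((hwc x (hKD hx)).add (continuousAt_const.mul (hφc x hx))).continuousWithinAt
      obtain ⟨x₀, hx₀K, hx₀min⟩ := hKcomp.exists_isMinOn ⟨y, hyK⟩ hvc
      have hx₀min' : ∀ z ∈ K, vδ x₀ ≤ vδ z := fun z hz => isMinOn_iff.1 hx₀min z hz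
      have hx₀le : ‖x₀‖ ≤ r := mem_closedBall_zero_iff.1 hx₀K.1
      have hx₀ge : ε ≤ ‖x₀‖ := not_lt.1 (fun h => hx₀K.2 (mem_ball_zero_iff.2 h))
      rcases eq_or_lt_of_le hx₀le with hcase1 | hcase1'
      · have hx₀s : x₀ ∈ sphere (0 : EuclideanSpace ℝ (Fin n)) r :=
          mem_sphere_zero_iff_norm.2 hcase1
        have h1 : w xs ≤ w x₀ := isMinOn_iff.1 hxs_min x₀ hx₀s
        have h2 : φ x₀ = cr := by rw [hφdef, hcrdef]; simp only []; rw [hcase1]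
        have h3 : vδ x₀ ≤ vδ y := hx₀min' y hyK
        have e1 : vδ y = w y + δ * φ y := rfl
        have e2 : vδ x₀ = w x₀ + δ * φ x₀ := rfl
        rw [e1, e2, h2] at h3
        nlinarith
      exfalso
      rcases eq_or_lt_of_le hx₀ge with hcase2 | hcase2'
      · have hφx₀ : φ x₀ = Real.log (-Real.log (ε^2)) := by
          rw [hφdef]; simp only []; rw [← hcase2]
        have hwl : cu - ‖V‖ ≤ w x₀ := hwlb x₀ (hKD hx₀K)
        have h3 : vδ x₀ ≤ vδ y := hx₀min' y hyK
        have hTval : δ * T = w y + δ * φ y - (cu - ‖V‖) := by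
          rw [hTdef]; field_simp
        have hTneq : T < φ x₀ := by rw [hφx₀]; exact hεT
        have e1 : vδ y = w y + δ * φ y := rfl
        have e2 : vδ x₀ = w x₀ + δ * φ x₀ := rfl
        rw [e1, e2] at h3
        nlinarith
      -- interior case
      have hx₀D : x₀ ∈ D := hKD hx₀K
      have hx₀ne : x₀ ≠ 0 := fun h => hx₀D.2 (by simp [h])
      have hρ0 : 0 < ‖x₀‖ := norm_pos_iff.2 hx₀ne
      have hρ1 : ‖x₀‖ < 1 := lt_trans hcase1' hr1
      set q₀ : ℝ := ‖x₀‖^2 with hq₀def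
      have hq₀0 : 0 < q₀ := by positivity
      have hq₀1 : q₀ < 1 := by rw [hq₀def]; nlinarith
      have hloc : IsLocalMin vδ x₀ := by
        have hU : IsOpen (ball (0 : EuclideanSpace ℝ (Fin n)) r \ closedBall 0 ε) :=
          isOpen_ball.sdiff Metric.isClosed_closedBall
        have hx₀U : x₀ ∈ ball (0 : EuclideanSpace ℝ (Fin n)) r \ closedBall 0 ε :=
          ⟨mem_ball_zero_iff.2 hcase1', fun h => absurd (mem_closedBall_zero_iff.1 h)
            (not_le.2 hcase2')⟩
        filter_upwards [hU.mem_nhds hx₀U] with z hz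
        exact hx₀min' z ⟨mem_closedBall_zero_iff.2 (le_of_lt (mem_ball_zero_iff.1 hz.1)),
          fun hb => hz.2 (mem_closedBall_zero_iff.2 (le_of_lt (mem_ball_zero_iff.1 hb)))⟩
      have hu₀ : ContDiffAt ℝ 2 u x₀ := hC2 x₀ hx₀D
      have hA : (hessianMatrix n u x₀).IsHermitian := aux_hermitian hu₀
      obtain ⟨i, j, hij, hμ⟩ := aux_two_indices hn hA (hEig x₀ hx₀D)
      set b := hA.eigenvectorBasis with hbdef
      obtain ⟨C2, hC2eq⟩ : ∃ z, (-(q₀^2)⁻¹ * (Real.log q₀)⁻¹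
          + q₀⁻¹ * (-q₀⁻¹ / (Real.log q₀)^2)) = z := ⟨_, rfl⟩
      obtain ⟨C1, hC1eq⟩ : ∃ z, q₀⁻¹ / Real.log q₀ = z := ⟨_, rfl⟩
      have key2 : ∀ k : Fin n, 0 ≤ hA.eigenvalues k
          + δ * (C2 * (2 * (inner ℝ x₀ (b k) : ℝ))^2 + C1 * 2) := by
        intro k
        have he1 : ‖b k‖ = 1 := b.orthonormal.1 k
        obtain ⟨e, hedef⟩ : ∃ z, b k = z := ⟨_, rfl⟩
        rw [hedef] at he1
        obtain ⟨a, hadef⟩ : ∃ z, (inner ℝ x₀ e : ℝ) = z := ⟨_, rfl⟩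
        set p : ℝ → ℝ := fun t => q₀ + 2*(t*a) + t^2 with hpdef
        have hp : ∀ t : ℝ, ‖x₀ + t • e‖^2 = p t := by
          intro t
          rw [hpdef]; simp only []
          rw [norm_add_sq_real, real_inner_smul_right, norm_smul, he1, mul_one,
            Real.norm_eq_abs, hadef, hq₀def]
          rw [sq_abs]
        have hpd : ∀ t : ℝ, HasDerivAt p (2*a + 2*t) t := by
          intro t
          have h1 : HasDerivAt (fun s : ℝ => q₀ + 2*(s*a) + s^2)
              (0 + 2*(1*a) + ↑(2:ℕ)*t^(2-1)) t :=
            ((hasDerivAt_const t q₀).add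
              (HasDerivAt.const_mul 2 ((hasDerivAt_id t).mul_const a))).add
              (hasDerivAt_pow 2 t)
          rw [hpdef]
          convert h1 using 1
          push_cast
          ring
        have hptr : ∀ᶠ t in 𝓝 (0:ℝ), p t ∈ Ioo (0:ℝ) 1 := by
          have hpc : Continuous p := by
            rw [hpdef]
            exact (continuous_const.add (continuous_const.mul (continuous_id.mul continuous_const))).add
              (continuous_pow 2)
          have hp0' : p 0 ∈ Ioo (0:ℝ) 1 := by
            have : p 0 = q₀ := by rw [hpdef]; simp
            rw [this]; exact ⟨hq₀0, hq₀1⟩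
          exact hpc.continuousAt.preimage_mem_nhds (isOpen_Ioo.mem_nhds hp0')
        have hgl : IsLocalMin (fun t : ℝ => vδ (x₀ + t • e)) 0 := by
          have hltc : Continuous (fun t : ℝ => x₀ + t • e) :=
            continuous_const.add (continuous_id.smul continuous_const)
          have hlt : Tendsto (fun t : ℝ => x₀ + t • e) (𝓝 0) (𝓝 x₀) := by
            have h00 := hltc.tendsto 0
            simpa using h00
          have hevm := hlt.eventually hloc
          refine hevm.mono fun t ht => ?_
          simpa using ht
        obtain ⟨hev_u, hd2_u⟩ := aux_line e hu₀
        have hgeq : ∀ t : ℝ, vδ (x₀ + t • e) = u (x₀ + t • e)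
            + ((inner ℝ V x₀ : ℝ) + t * (inner ℝ V e : ℝ)) + δ * Real.log (-Real.log (p t)) := by
          intro t
          have h1 : (inner ℝ V (x₀ + t • e) : ℝ) = (inner ℝ V x₀ : ℝ) + t * (inner ℝ V e : ℝ) := by
            rw [inner_add_right, real_inner_smul_right]
          have h2 : φ (x₀ + t • e) = Real.log (-Real.log (p t)) := by
            rw [hφdef]; simp only []; rw [hp t]
          show w (x₀ + t • e) + δ * φ (x₀ + t • e) = _
          have h3 : w (x₀ + t • e) = u (x₀ + t • e) + (inner ℝ V (x₀ + t • e) : ℝ) := rfl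
          rw [h3, h1, h2]
        set g₁ : ℝ → ℝ := fun t => fderiv ℝ u (x₀ + t • e) e + (inner ℝ V e : ℝ)
          + δ * ((p t)⁻¹ / Real.log (p t) * (2*a + 2*t)) with hg₁def
        have hd : ∀ᶠ t in 𝓝 (0:ℝ), HasDerivAt (fun s => vδ (x₀ + s • e)) (g₁ t) t := by
          filter_upwards [hev_u, hptr] with t htu htp
          have h1 : HasDerivAt (fun s : ℝ => (inner ℝ V x₀ : ℝ) + s * (inner ℝ V e : ℝ))
              ((inner ℝ V e : ℝ)) t := by
            simpa using ((hasDerivAt_id t).mul_const ((inner ℝ V e : ℝ))).const_add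
              ((inner ℝ V x₀ : ℝ))
          have h2 : HasDerivAt (fun s : ℝ => Real.log (-Real.log (p s)))
              ((p t)⁻¹ / Real.log (p t) * (2*a + 2*t)) t := by
            have := (aux_H1 htp.1 htp.2).comp t (hpd t)
            exact this
          have h3 := (htu.add h1).add (HasDerivAt.const_mul δ h2)
          refine HasDerivAt.congr_of_eventuallyEq h3 ?_
          exact Eventually.of_forall fun s => hgeq s
        have hp0 : p 0 = q₀ := by rw [hpdef]; simp
        have hmulder : HasDerivAt (fun t : ℝ => (p t)⁻¹ / Real.log (p t) * (2*a + 2*t))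
            ((-(q₀^2)⁻¹ * (Real.log q₀)⁻¹ + q₀⁻¹ * (-q₀⁻¹ / (Real.log q₀)^2)) * (2*a + 2*0)
              * (2*a + 2*0) + (q₀⁻¹ / Real.log q₀) * 2) 0 := by
          have hH2 := aux_H2 hq₀0 hq₀1
          rw [← hp0] at hH2
          have hcomp : HasDerivAt (fun t : ℝ => (p t)⁻¹ / Real.log (p t))
              ((-((p 0)^2)⁻¹ * (Real.log (p 0))⁻¹ + (p 0)⁻¹ * (-(p 0)⁻¹ / (Real.log (p 0))^2))
                * (2*a + 2*0)) 0 := hH2.comp 0 (hpd 0)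
          rw [hp0] at hcomp
          have haff : HasDerivAt (fun t : ℝ => 2*a + 2*t) 2 0 := by
            simpa using (HasDerivAt.const_mul (2:ℝ) (hasDerivAt_id (0:ℝ))).const_add (2*a)
          have hres := hcomp.mul haff
          rw [hp0] at hres
          exact hres
        have hd2 : HasDerivAt g₁ (fderiv ℝ (fderiv ℝ u) x₀ e e + 0
            + δ * ((-(q₀^2)⁻¹ * (Real.log q₀)⁻¹ + q₀⁻¹ * (-q₀⁻¹ / (Real.log q₀)^2))
              * (2*a + 2*0) * (2*a + 2*0) + (q₀⁻¹ / Real.log q₀) * 2)) 0 :=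
          (hd2_u.add (hasDerivAt_const 0 _)).add (HasDerivAt.const_mul δ hmulder)
        have h0c := aux_sdt hd hd2 hgl
        have hquad : fderiv ℝ (fderiv ℝ u) x₀ e e = hA.eigenvalues k := by
          rw [← hedef]
          exact aux_eigen_quad hu₀ hA k
        rw [hquad] at h0c
        have harith : hA.eigenvalues k + 0
            + δ * ((-(q₀^2)⁻¹ * (Real.log q₀)⁻¹ + q₀⁻¹ * (-q₀⁻¹ / (Real.log q₀)^2))
              * (2*a + 2*0) * (2*a + 2*0) + (q₀⁻¹ / Real.log q₀) * 2)
            = hA.eigenvalues k + δ * (C2 * (2*a)^2 + C1 * 2) := by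
          rw [← hC2eq, ← hC1eq]
          ring
        rw [harith] at h0c
        rw [hedef, hadef]
        exact h0c
      have hk1 := key2 i
      have hk2 := key2 j
      obtain ⟨a1, ha1⟩ : ∃ z, (inner ℝ x₀ (b i) : ℝ) = z := ⟨_, rfl⟩
      obtain ⟨a2, ha2⟩ : ∃ z, (inner ℝ x₀ (b j) : ℝ) = z := ⟨_, rfl⟩
      rw [ha1] at hk1
      rw [ha2] at hk2
      have hbes : a1^2 + a2^2 ≤ q₀ := by
        have hB := aux_bessel b x₀ hij
        calc a1^2 + a2^2
            = (inner ℝ (b i) x₀ : ℝ)^2 + (inner ℝ (b j) x₀ : ℝ)^2 := by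
              rw [real_inner_comm x₀ (b i), real_inner_comm x₀ (b j), ha1, ha2]
          _ ≤ ‖x₀‖^2 := hB
          _ = q₀ := hq₀def.symm
      have hneg : (a1^2 + a2^2) * C2 + C1 < 0 := by
        have := aux_keyneg hq₀0 hq₀1 (by positivity : (0:ℝ) ≤ a1^2 + a2^2) hbes
        rw [hC2eq, hC1eq] at this
        linarith [this]
      nlinarith [hk1, hk2, hμ, mul_pos hδ (neg_pos.2 hneg)]
    rcases le_or_gt (φ y) cr with hc | hc
    · have h1 := main 1 one_pos
      linarith
    · by_contra hlt
      push_neg at hlt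
      have h2ne : φ y - cr ≠ 0 := ne_of_gt (by linarith)
      obtain ⟨δ, hδdef⟩ : ∃ z, (w xs - w y) / (2 * (φ y - cr)) = z := ⟨_, rfl⟩
      have hδpos : 0 < δ := by
        rw [← hδdef]
        exact div_pos (by linarith) (by linarith)
      have hmain := main δ hδpos
      have hδeq : δ * (φ y - cr) = (w xs - w y) / 2 := by
        rw [← hδdef]
        have hfrac : (φ y - cr) / (2 * (φ y - cr)) = 1/2 := by
          rw [mul_comm, ← div_div, div_self h2ne]
        calc (w xs - w y) / (2 * (φ y - cr)) * (φ y - cr)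
            = (w xs - w y) * ((φ y - cr) / (2 * (φ y - cr))) := by ring
          _ = (w xs - w y) * (1/2) := by rw [hfrac]
          _ = (w xs - w y) / 2 := by ring
      have e1 : δ * φ y - δ * cr = δ * (φ y - cr) := by ring
      have e2 : w xs - w y ≤ δ * φ y - δ * cr := by linarith [hmain]
      have e3 : δ * φ y - δ * cr = (w xs - w y) / 2 := e1.trans hδeq
      have hfin : w xs - w y ≤ (w xs - w y) / 2 := le_of_le_of_eq e2 e3
      obtain ⟨s, hs⟩ : ∃ z, w xs - w y = z := ⟨_, rfl⟩
      rw [hs] at hfin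
      have hpos : 0 < s := by rw [← hs]; linarith [hlt]
      linarith [hfin, hpos]
  have hy₀ : (2⁻¹ : ℝ) • xs ∈ ball (0 : EuclideanSpace ℝ (Fin n)) r \ {0} := by
    constructor
    · rw [mem_ball_zero_iff, norm_smul, hxs_norm, Real.norm_eq_abs]
      rw [abs_of_pos (by norm_num : (0:ℝ) < 2⁻¹)]
      linarith
    · simp only [mem_singleton_iff, smul_eq_zero]
      push_neg
      exact ⟨by norm_num, hxsne⟩
  have hbdd' : BddBelow (w '' (ball (0 : EuclideanSpace ℝ (Fin n)) r \ {0})) :=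
    ⟨w xs, by rintro z ⟨y, hy, rfl⟩; exact key y hy⟩
  have h1 : w xs ≤ sInf (w '' (ball (0 : EuclideanSpace ℝ (Fin n)) r \ {0})) :=
    le_csInf ⟨w _, mem_image_of_mem w hy₀⟩ (by rintro z ⟨y, hy, rfl⟩; exact key y hy)
  have h2 : sInf (w '' (ball (0 : EuclideanSpace ℝ (Fin n)) r \ {0})) ≤ w xs := by
    have hev : ∀ᶠ t in 𝓝[<] (1:ℝ),
        sInf (w '' (ball (0 : EuclideanSpace ℝ (Fin n)) r \ {0})) ≤ w (t • xs) := by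
      filter_upwards [Ioo_mem_nhdsLT_of_mem (⟨zero_lt_one, le_rfl⟩ : (1:ℝ) ∈ Ioc 0 1)]
        with t ht
      apply csInf_le hbdd'
      refine mem_image_of_mem w ⟨?_, ?_⟩
      · rw [mem_ball_zero_iff, norm_smul, hxs_norm, Real.norm_eq_abs, abs_of_pos ht.1]
        nlinarith [ht.2, hr]
      · simp only [mem_singleton_iff, smul_eq_zero]
        push_neg
        exact ⟨ht.1.ne', hxsne⟩
    have htend : Tendsto (fun t : ℝ => w (t • xs)) (𝓝[<] 1) (𝓝 (w xs)) := by
      have hline : ContinuousAt (fun t : ℝ => t • xs) 1 :=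
        (continuous_id.smul continuous_const).continuousAt
      have h1s : (fun t : ℝ => t • xs) 1 = xs := one_smul _ _
      have hxw : ContinuousAt w ((fun t : ℝ => t • xs) 1) := by
        rw [h1s]; exact hwc xs (hsub1 hxs_mem)
      have h0 : ContinuousAt (fun t : ℝ => w (t • xs)) 1 :=
        ContinuousAt.comp (g := w) (f := fun t : ℝ => t • xs) hxw hline
      have h0t := h0.tendsto.mono_left (nhdsWithin_le_nhds : 𝓝[<] (1:ℝ) ≤ 𝓝 1)
      rw [one_smul] at h0t
      exact h0t
    exact ge_of_tendsto htend hev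
  have hm : sInf (w '' (ball (0 : EuclideanSpace ℝ (Fin n)) r \ {0})) = w xs :=
    le_antisymm h2 h1
  rw [hm]
  exact ⟨mem_image_of_mem w hxs_mem,
    by rintro z ⟨x', hx', rfl⟩; exact isMinOn_iff.1 hxs_min x' hx'⟩
end
end

section
/- Let n ≥ 2 and let u : B₁ ∖ {0} → ℝ satisfy liminf_{x → 0} u(x) = 0 and condition (★) with radius r̄ = 1. Let P denote the set of vectors p ∈ ℝⁿ such that u(x) ≥ p·x + o(|x|) as x → 0. Then there do not exist n+1 vectors p₀, p₁, …, pₙ ∈ P such that p₁ − p₀, …, pₙ − p₀ are linearly independent; equivalently, the convex hull of P has dimension at most n−1. -/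
open Filter Metric Set MeasureTheory Topology RealInnerProductSpace

attribute [local instance] Matrix.normedAddCommGroup Matrix.normedSpace

noncomputable section

set_option maxHeartbeats 1000000 in
/-- Lemma 1.2: for a function satisfying condition (★) on the punctured
unit ball with `liminf_{x→0} u = 0`, the set `P` of lower supporting slopes at `0` contains
no `n + 1` affinely independent vectors. -/
theorem stmt_9 (n : ℕ) (hn : 2 ≤ n) (u : EuclideanSpace ℝ (Fin n) → ℝ)
    (hlim1 : ∀ ε : ℝ, 0 < ε → ∀ᶠ x in 𝓝[≠] (0 : EuclideanSpace ℝ (Fin n)), -ε < u x)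
    (hlim2 : ∀ ε : ℝ, 0 < ε → ∃ᶠ x in 𝓝[≠] (0 : EuclideanSpace ℝ (Fin n)), u x < ε)
    (hstar : StarCond n u 1) :
    ¬ ∃ p : Fin (n + 1) → EuclideanSpace ℝ (Fin n),
        (∀ i : Fin (n + 1), ∀ δ : ℝ, 0 < δ → ∃ ρ : ℝ, 0 < ρ ∧
          ∀ x : EuclideanSpace ℝ (Fin n), x ≠ 0 → ‖x‖ < ρ →
            (inner ℝ (p i) x : ℝ) - δ * ‖x‖ ≤ u x) ∧
        LinearIndependent ℝ (fun i : Fin n => p i.succ - p 0) := by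
  rintro ⟨p, hP, hLI⟩
  haveI : NeZero n := ⟨by omega⟩
  set V : EuclideanSpace ℝ (Fin n) := -((n + 1 : ℝ)⁻¹ • ∑ j, p j) with hV
  set q : Fin (n + 1) → EuclideanSpace ℝ (Fin n) := fun i => p i + V with hq
  have hdiff : ∀ i : Fin n, q i.succ - q 0 = p i.succ - p 0 := by
    intro i; simp only [hq]; abel
  have hsum : ∑ i, q i = 0 := by
    have hcard : (Finset.univ : Finset (Fin (n + 1))).card = n + 1 := by simp
    have h1 : ((n : ℝ) + 1) ≠ 0 := by positivity
    simp only [hq, Finset.sum_add_distrib, Finset.sum_const, hcard, hV]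
    rw [← Nat.cast_smul_eq_nsmul ℝ, smul_neg, smul_smul]
    push_cast
    rw [mul_inv_cancel₀ h1, one_smul]
    abel
  -- basis from linear independence
  have hcard' : Fintype.card (Fin n) = Module.finrank ℝ (EuclideanSpace ℝ (Fin n)) := by
    rw [finrank_euclideanSpace]
  let b := basisOfLinearIndependentOfCardEqFinrank hLI hcard'
  have hb : ⇑b = fun i : Fin n => p i.succ - p 0 :=
    coe_basisOfLinearIndependentOfCardEqFinrank hLI hcard'
  have hker : ∀ x : EuclideanSpace ℝ (Fin n), (∀ i, ⟪q i, x⟫ = 0) → x = 0 := by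
    intro x hx
    have hbx : ∀ i : Fin n, ⟪b i, x⟫ = 0 := by
      intro i
      have : ⟪q i.succ - q 0, x⟫ = 0 := by rw [inner_sub_left, hx, hx]; ring
      rw [hdiff i] at this
      rw [hb]; exact this
    have hxx : ⟪x, x⟫ = 0 := by
      nth_rewrite 1 [← b.sum_repr x]
      rw [sum_inner]
      simp only [real_inner_smul_left, hbx, mul_zero, Finset.sum_const_zero]
    exact inner_self_eq_zero.mp hxx
  -- the max function
  have hne : (Finset.univ : Finset (Fin (n + 1))).Nonempty := Finset.univ_nonempty
  set F : EuclideanSpace ℝ (Fin n) → ℝ :=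
    fun x => Finset.univ.sup' hne (fun i => ⟪q i, x⟫) with hF
  have hFcont : Continuous F :=
    Continuous.finset_sup'_apply hne fun i _ => continuous_const.inner continuous_id
  have hFpos : ∀ x : EuclideanSpace ℝ (Fin n), x ≠ 0 → 0 < F x := by
    intro x hx
    by_contra h
    push_neg at h
    have hle : ∀ i : Fin (n + 1), ⟪q i, x⟫ ≤ 0 := fun i =>
      le_trans (Finset.le_sup' (fun i => ⟪q i, x⟫) (Finset.mem_univ i)) h
    have hs0 : ∑ i, ⟪q i, x⟫ = (0 : ℝ) := by rw [← sum_inner, hsum, inner_zero_left]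
    have : ∀ i ∈ Finset.univ, ⟪q i, x⟫ = (0 : ℝ) := by
      intro i hi
      have := (Finset.sum_eq_zero_iff_of_nonpos (fun i _ => hle i)).mp hs0
      exact this i hi
    exact hx (hker x fun i => this i (Finset.mem_univ i))
  -- min on unit sphere
  have hsne : (sphere (0 : EuclideanSpace ℝ (Fin n)) 1).Nonempty := by
    refine ⟨EuclideanSpace.single ⟨0, by omega⟩ 1, ?_⟩
    simp [EuclideanSpace.norm_single]
  obtain ⟨x₀, hx₀s, hx₀min⟩ :=
    (isCompact_sphere (0 : EuclideanSpace ℝ (Fin n)) 1).exists_isMinOn hsne hFcont.continuousOn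
  set c : ℝ := F x₀ with hc
  have hx₀n : ‖x₀‖ = 1 := mem_sphere_zero_iff_norm.mp hx₀s
  have hcpos : 0 < c := hFpos x₀ (by intro h; rw [h] at hx₀n; simp at hx₀n)
  -- homogeneous lower bound
  have key : ∀ x : EuclideanSpace ℝ (Fin n), x ≠ 0 → ∃ i, c * ‖x‖ ≤ ⟪q i, x⟫ := by
    intro x hx
    have hxn : (0 : ℝ) < ‖x‖ := norm_pos_iff.mpr hx
    set y : EuclideanSpace ℝ (Fin n) := ‖x‖⁻¹ • x with hy
    have hys : y ∈ sphere (0 : EuclideanSpace ℝ (Fin n)) 1 := by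
      simp [hy, norm_smul, abs_of_pos (inv_pos.mpr hxn), inv_mul_cancel₀ hxn.ne']
    obtain ⟨i, _, hieq⟩ := Finset.exists_mem_eq_sup' hne (fun i => ⟪q i, y⟫)
    refine ⟨i, ?_⟩
    have h1 : c ≤ ⟪q i, y⟫ := by rw [← hieq]; exact hx₀min hys
    have h2 : ⟪q i, y⟫ = ‖x‖⁻¹ * ⟪q i, x⟫ := by rw [hy, inner_smul_right]
    rw [h2] at h1
    calc c * ‖x‖ ≤ (‖x‖⁻¹ * ⟪q i, x⟫) * ‖x‖ := by
          exact mul_le_mul_of_nonneg_right h1 hxn.le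
      _ = ⟪q i, x⟫ := by field_simp
  -- slopes bound
  have hρ : ∀ i : Fin (n + 1), ∃ ρ : ℝ, 0 < ρ ∧
      ∀ x : EuclideanSpace ℝ (Fin n), x ≠ 0 → ‖x‖ < ρ →
        ⟪p i, x⟫ - (c / 2) * ‖x‖ ≤ u x := fun i => hP i (c / 2) (by positivity)
  choose ρf hρf1 hρf2 using hρ
  set ρ : ℝ := Finset.univ.inf' hne ρf with hρdef
  have hρpos : 0 < ρ := by
    rw [hρdef, Finset.lt_inf'_iff]
    exact fun i _ => hρf1 i
  have hlow : ∀ x : EuclideanSpace ℝ (Fin n), x ≠ 0 → ‖x‖ < ρ →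
      (c / 2) * ‖x‖ ≤ u x + ⟪V, x⟫ := by
    intro x hx hxρ
    obtain ⟨i, hi⟩ := key x hx
    have h1 : ⟪p i, x⟫ - (c / 2) * ‖x‖ ≤ u x :=
      hρf2 i x hx (lt_of_lt_of_le hxρ (Finset.inf'_le ρf (Finset.mem_univ i)))
    have h2 : ⟪q i, x⟫ = ⟪p i, x⟫ + ⟪V, x⟫ := by rw [hq]; simp [inner_add_left]
    nlinarith [hi, h1, h2]
  -- choose radius
  set r : ℝ := min ρ 1 / 2 with hr
  have hrpos : 0 < r := by positivity
  have hrρ : r < ρ := by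
    have : min ρ 1 ≤ ρ := min_le_left _ _
    linarith
  have hr1 : r < 1 := by
    have : min ρ 1 ≤ 1 := min_le_right _ _
    linarith
  set w : EuclideanSpace ℝ (Fin n) → ℝ := fun x => u x + ⟪V, x⟫ with hw
  set m : ℝ := (c / 2) * r with hm
  have hmpos : 0 < m := by rw [hm]; positivity
  have hIs := hstar V r hrpos hr1
  obtain ⟨⟨x₁, hx₁s, hx₁eq⟩, _⟩ := hIs
  have hx₁n : ‖x₁‖ = r := mem_sphere_zero_iff_norm.mp hx₁s
  have hx₁0 : x₁ ≠ 0 := by intro h; rw [h] at hx₁n; simp at hx₁n; linarith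
  have hsInfge : m ≤ sInf (w '' (ball (0 : EuclideanSpace ℝ (Fin n)) r \ {0})) := by
    rw [← hx₁eq]
    have := hlow x₁ hx₁0 (by rw [hx₁n]; exact hrρ)
    rw [hx₁n] at this
    exact this
  have hbdd : BddBelow (w '' (ball (0 : EuclideanSpace ℝ (Fin n)) r \ {0})) := by
    refine ⟨0, ?_⟩
    rintro t ⟨y, ⟨hyb, hy0⟩, rfl⟩
    have hy0' : y ≠ 0 := hy0
    have hyr : ‖y‖ < r := mem_ball_zero_iff.mp hyb
    have h5 := hlow y hy0' (lt_trans hyr hrρ)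
    have hyn : 0 < ‖y‖ := norm_pos_iff.mpr hy0'
    have h6 : w y = u y + ⟪V, y⟫ := rfl
    nlinarith
  -- small point with small value
  set R : ℝ := min r (m / (2 * (‖V‖ + 1))) with hR
  have hRpos : 0 < R := lt_min hrpos (div_pos hmpos (by positivity))
  have hev : ∀ᶠ y in 𝓝[≠] (0 : EuclideanSpace ℝ (Fin n)), ‖y‖ < R ∧ y ≠ 0 := by
    filter_upwards [eventually_nhdsWithin_of_eventually_nhds
      (Metric.eventually_nhds_iff.mpr ⟨R, hRpos, fun {z} hz => by
        simpa using hz⟩), eventually_mem_nhdsWithin] with y h1 h2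
    exact ⟨by simpa [dist_eq_norm] using h1, h2⟩
  obtain ⟨y, hy1, hyR, hy0⟩ := ((hlim2 (m / 2) (half_pos hmpos)).and_eventually hev).exists
  have hyball : y ∈ ball (0 : EuclideanSpace ℝ (Fin n)) r \ {0} := by
    constructor
    · exact mem_ball_zero_iff.mpr (lt_of_lt_of_le hyR (min_le_left _ _))
    · exact hy0
  have hinner : ⟪V, y⟫ ≤ ‖V‖ * ‖y‖ := real_inner_le_norm V y
  have hVy : ‖V‖ * ‖y‖ ≤ m / 2 := by
    have h1 : ‖y‖ ≤ m / (2 * (‖V‖ + 1)) := le_of_lt (lt_of_lt_of_le hyR (min_le_right _ _))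
    have h2 : (0 : ℝ) ≤ ‖V‖ := norm_nonneg V
    have h3 : (0 : ℝ) < ‖V‖ + 1 := by linarith
    calc ‖V‖ * ‖y‖ ≤ ‖V‖ * (m / (2 * (‖V‖ + 1))) :=
          mul_le_mul_of_nonneg_left h1 h2
      _ ≤ (‖V‖ + 1) * (m / (2 * (‖V‖ + 1))) := by
          apply mul_le_mul_of_nonneg_right (by linarith)
          positivity
      _ = m / 2 := by field_simp
  have hwy : w y < m := by
    have : w y = u y + ⟪V, y⟫ := rfl
    nlinarith
  have hle : sInf (w '' (ball (0 : EuclideanSpace ℝ (Fin n)) r \ {0})) ≤ w y :=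
    csInf_le hbdd ⟨y, hyball, rfl⟩
  linarith
end
end

section
/- Let n ≥ 2, let 1 ≤ k < l ≤ n, let δ₁, …, δ_k be real numbers with 0 < δᵢ ≤ (l−k)/k for each 1 ≤ i ≤ k, and let M be an n×n real symmetric matrix. Let D = diag(1, …, 1, −δ₁, …, −δ_k) be the diagonal matrix whose first n−k diagonal entries equal 1 and whose last k diagonal entries are −δ₁, …, −δ_k. Then λ₁(M−D) + ⋯ + λ_l(M−D) ≤ λ₁(M) + ⋯ + λ_l(M). -/
open Filter Metric Set MeasureTheory Topology

attribute [local instance] Matrix.normedAddCommGroup Matrix.normedSpace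

noncomputable section

section KyFanAux

open Matrix

lemma filter_lt_eq_map {n l : ℕ} (hln : l ≤ n) :
    Finset.univ.filter (fun j : Fin n => (j : ℕ) < l)
      = Finset.map (Fin.castLEEmb hln) Finset.univ := by
  ext j
  simp only [Finset.mem_filter, Finset.mem_map, Finset.mem_univ, true_and]
  constructor
  · intro h
    exact ⟨⟨(j : ℕ), h⟩, by ext; simp⟩
  · rintro ⟨i, rfl⟩
    simpa using i.isLt

lemma sum_filter_lt {n l : ℕ} (hln : l ≤ n) (f : Fin n → ℝ) :
    ∑ j ∈ Finset.univ.filter (fun j : Fin n => (j : ℕ) < l), f j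
      = ∑ i : Fin l, f (Fin.castLE hln i) := by
  rw [filter_lt_eq_map hln, Finset.sum_map]
  rfl

lemma sorted_sum_lb {n l : ℕ} (hl1 : 1 ≤ l) (hln : l ≤ n) (μ s : Fin n → ℝ)
    (hmono : Monotone μ) (hs0 : ∀ j, 0 ≤ s j) (hs1 : ∀ j, s j ≤ 1)
    (hsum : ∑ j, s j = l) :
    ∑ j ∈ Finset.univ.filter (fun j : Fin n => (j : ℕ) < l), μ j ≤ ∑ j, μ j * s j := by
  set c : ℝ := μ ⟨l - 1, by omega⟩ with hc
  set F := Finset.univ.filter (fun j : Fin n => (j : ℕ) < l) with hF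
  set G := Finset.univ.filter (fun j : Fin n => ¬ (j : ℕ) < l) with hG
  have key1 : ∀ j ∈ F, μ j ≤ μ j * s j + c * (1 - s j) := by
    intro j hj
    have hjl : (j : ℕ) < l := by simpa [hF] using hj
    have hμ : μ j ≤ c := hmono (by simp only [Fin.le_def]; omega)
    nlinarith [hs1 j, hs0 j]
  have key2 : ∀ j ∈ G, c * s j ≤ μ j * s j := by
    intro j hj
    have hjl : ¬ (j : ℕ) < l := by simpa [hG] using hj
    have hμ : c ≤ μ j := hmono (by simp only [Fin.le_def]; omega)
    nlinarith [hs0 j]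
  have hFone : ∑ j ∈ F, (1 : ℝ) = l := by
    rw [hF, sum_filter_lt hln]; simp
  have hsplit : ∑ j ∈ F, s j + ∑ j ∈ G, s j = (l : ℝ) := by
    rw [hF, hG, Finset.sum_filter_add_sum_filter_not, hsum]
  have h1 : ∑ j ∈ F, μ j ≤ ∑ j ∈ F, (μ j * s j + c * (1 - s j)) := Finset.sum_le_sum key1
  have h2 : ∑ j ∈ F, (μ j * s j + c * (1 - s j))
      = ∑ j ∈ F, μ j * s j + c * ∑ j ∈ G, s j := by
    rw [Finset.sum_add_distrib]
    congr 1
    have h0 : ∑ j ∈ G, s j = (l : ℝ) - ∑ j ∈ F, s j := by linarith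
    rw [← Finset.mul_sum, Finset.sum_sub_distrib, hFone, h0]
  have h3 : c * ∑ j ∈ G, s j ≤ ∑ j ∈ G, μ j * s j := by
    rw [Finset.mul_sum]; exact Finset.sum_le_sum key2
  have h4 : ∑ j ∈ F, μ j * s j + ∑ j ∈ G, μ j * s j = ∑ j, μ j * s j := by
    rw [hF, hG, Finset.sum_filter_add_sum_filter_not]
  linarith

lemma proj_diag_bounds {m n : ℕ} (W : Matrix (Fin n) (Fin m) ℝ) (hW : Wᵀ * W = 1) :
    (∀ j, 0 ≤ (W * Wᵀ) j j) ∧ (∀ j, (W * Wᵀ) j j ≤ 1) ∧ (∑ j, (W * Wᵀ) j j = m) := by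
  have hP : (W * Wᵀ) * (W * Wᵀ) = W * Wᵀ := by
    rw [Matrix.mul_assoc, ← Matrix.mul_assoc Wᵀ, hW, Matrix.one_mul]
  have hsymm : (W * Wᵀ)ᵀ = W * Wᵀ := by
    rw [Matrix.transpose_mul, Matrix.transpose_transpose]
  have hnonneg : ∀ j, 0 ≤ (W * Wᵀ) j j := by
    intro j
    rw [Matrix.mul_apply]
    exact Finset.sum_nonneg fun i _ => by
      rw [Matrix.transpose_apply]; exact mul_self_nonneg _
  refine ⟨hnonneg, ?_, ?_⟩
  · intro j
    have h1 : (W * Wᵀ) j j = ∑ c, ((W * Wᵀ) j c)^2 := by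
      conv_lhs => rw [← hP]
      rw [Matrix.mul_apply]
      refine Finset.sum_congr rfl fun c _ => ?_
      have h' : (W * Wᵀ) c j = (W * Wᵀ) j c := by
        conv_lhs => rw [← hsymm]
        simp [Matrix.transpose_apply]
      rw [h']; ring
    have h2 : ((W * Wᵀ) j j)^2 ≤ ∑ c, ((W * Wᵀ) j c)^2 :=
      Finset.single_le_sum (f := fun c => ((W * Wᵀ) j c)^2)
        (fun c _ => sq_nonneg _) (Finset.mem_univ j)
    nlinarith [hnonneg j]
  · have : ∑ j, (W * Wᵀ) j j = (W * Wᵀ).trace := rfl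
    rw [this, Matrix.trace_mul_comm, hW, Matrix.trace_one]
    simp

lemma kyFan_aux {n l : ℕ} (hl1 : 1 ≤ l) (hln : l ≤ n) {A : Matrix (Fin n) (Fin n) ℝ}
    (hA : A.IsHermitian) (s : Fin n → ℝ) (hs0 : ∀ j, 0 ≤ s j) (hs1 : ∀ j, s j ≤ 1)
    (hsum : ∑ j, s j = l) :
    sumLowEig n l A ≤ ∑ j, hA.eigenvalues j * s j := by
  set σ := Tuple.sort hA.eigenvalues with hσ
  have h1 : sumLowEig n l A
      = ∑ j ∈ Finset.univ.filter (fun j : Fin n => (j : ℕ) < l),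
          (hA.eigenvalues ∘ σ) j := by
    unfold sumLowEig sortedEig
    rw [dif_pos hA]
  have h2 : ∑ j, hA.eigenvalues j * s j
      = ∑ j, (hA.eigenvalues ∘ σ) j * (s ∘ σ) j :=
    (Equiv.sum_comp σ fun j => hA.eigenvalues j * s j).symm
  rw [h1, h2]
  refine sorted_sum_lb hl1 hln _ _ (Tuple.monotone_sort hA.eigenvalues)
    (fun j => hs0 _) (fun j => hs1 _) ?_
  rw [show (∑ j, (s ∘ σ) j) = ∑ j, s (σ j) from rfl, Equiv.sum_comp σ s, hsum]

lemma kyFan {n l : ℕ} (hl1 : 1 ≤ l) (hln : l ≤ n) {A : Matrix (Fin n) (Fin n) ℝ}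
    (hA : A.IsHermitian) (V : Matrix (Fin n) (Fin l) ℝ) (hV : Vᵀ * V = 1) :
    sumLowEig n l A ≤ (Vᵀ * A * V).trace := by
  set U : Matrix (Fin n) (Fin n) ℝ := (hA.eigenvectorUnitary : Matrix (Fin n) (Fin n) ℝ)
    with hU
  have hsU : star U = Uᵀ := by
    rw [Matrix.star_eq_conjTranspose, Matrix.conjTranspose_eq_transpose_of_trivial]
  have hUtU : Uᵀ * U = 1 := by
    rw [← hsU]; exact Unitary.coe_star_mul_self _
  have hUUt : U * Uᵀ = 1 := by
    rw [← hsU]; exact Unitary.coe_mul_star_self _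
  set W : Matrix (Fin n) (Fin l) ℝ := Uᵀ * V with hW
  have hWtW : Wᵀ * W = 1 := by
    rw [hW, Matrix.transpose_mul, Matrix.transpose_transpose, Matrix.mul_assoc,
      ← Matrix.mul_assoc U, hUUt, Matrix.one_mul, hV]
  have hspec : A = U * Matrix.diagonal hA.eigenvalues * Uᵀ := by
    have := hA.spectral_theorem
    rw [Unitary.conjStarAlgAut_apply, ← hU] at this
    rw [← hsU]
    exact this
  have hVAV : Vᵀ * A * V = Wᵀ * Matrix.diagonal hA.eigenvalues * W := by
    rw [hW, Matrix.transpose_mul, Matrix.transpose_transpose]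
    calc Vᵀ * A * V = Vᵀ * (U * Matrix.diagonal hA.eigenvalues * Uᵀ) * V := by
          rw [← hspec]
      _ = Vᵀ * U * Matrix.diagonal hA.eigenvalues * (Uᵀ * V) := by
          simp only [Matrix.mul_assoc]
  obtain ⟨hp0, hp1, hpsum⟩ := proj_diag_bounds W hWtW
  have htr : (Wᵀ * Matrix.diagonal hA.eigenvalues * W).trace
      = ∑ j, hA.eigenvalues j * (W * Wᵀ) j j := by
    rw [Matrix.trace_mul_comm, ← Matrix.mul_assoc]
    rw [Matrix.trace]
    refine Finset.sum_congr rfl fun j _ => ?_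
    rw [Matrix.diag_apply, Matrix.mul_diagonal]
    ring
  rw [hVAV, htr]
  exact kyFan_aux hl1 hln hA _ hp0 hp1 hpsum

lemma sum_d_t_nonneg {n k l : ℕ} (hk1 : 1 ≤ k) (hkl : k < l) (hln : l ≤ n)
    (d t : Fin n → ℝ)
    (hd1 : ∀ j : Fin n, (j : ℕ) < n - k → d j = 1)
    (hd2 : ∀ j : Fin n, ¬ (j : ℕ) < n - k → -(((l : ℝ) - k) / k) ≤ d j ∧ d j ≤ 0)
    (ht0 : ∀ j, 0 ≤ t j) (ht1 : ∀ j, t j ≤ 1) (hsum : ∑ j, t j = l) :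
    0 ≤ ∑ j, d j * t j := by
  have hkn : k ≤ n := le_trans (le_of_lt hkl) hln
  set C : ℝ := ((l : ℝ) - k) / k with hC
  have hC0 : 0 ≤ C := by
    apply div_nonneg
    · have : (k : ℝ) < l := by exact_mod_cast hkl
      linarith
    · positivity
  set F := Finset.univ.filter (fun j : Fin n => (j : ℕ) < n - k) with hF
  set G := Finset.univ.filter (fun j : Fin n => ¬ (j : ℕ) < n - k) with hG
  have hFone : ∑ j ∈ F, (1 : ℝ) = ((n - k : ℕ) : ℝ) := by
    rw [hF, sum_filter_lt (Nat.sub_le n k)]; simp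
  have hGone : ∑ j ∈ G, (1 : ℝ) = (k : ℝ) := by
    have htot : ∑ j ∈ F, (1 : ℝ) + ∑ j ∈ G, (1 : ℝ) = (n : ℝ) := by
      rw [hF, hG, Finset.sum_filter_add_sum_filter_not]; simp
    have hcast : ((n - k : ℕ) : ℝ) = (n : ℝ) - k := by
      rw [Nat.cast_sub hkn]
    linarith [hFone, hcast]
  have hsplit : ∑ j ∈ F, t j + ∑ j ∈ G, t j = (l : ℝ) := by
    rw [hF, hG, Finset.sum_filter_add_sum_filter_not, hsum]
  have hGt : ∑ j ∈ G, t j ≤ (k : ℝ) := by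
    rw [← hGone]
    exact Finset.sum_le_sum fun j _ => ht1 j
  have hFd : ∑ j ∈ F, d j * t j = ∑ j ∈ F, t j := by
    refine Finset.sum_congr rfl fun j hj => ?_
    rw [hd1 j (by simpa [hF] using hj), one_mul]
  have hGd : ∑ j ∈ G, (-C) ≤ ∑ j ∈ G, d j * t j := by
    refine Finset.sum_le_sum fun j hj => ?_
    obtain ⟨h1, h2⟩ := hd2 j (by simpa [hG] using hj)
    nlinarith [ht0 j, ht1 j]
  have hGC : ∑ j ∈ G, (-C) = -(((l : ℝ) - k)) := by
    rw [Finset.sum_const]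
    have : (G.card : ℝ) = (k : ℝ) := by
      rw [← hGone]; simp
    rw [nsmul_eq_mul, this, hC]
    field_simp
  have htotal : ∑ j, d j * t j = ∑ j ∈ F, d j * t j + ∑ j ∈ G, d j * t j := by
    rw [hF, hG, Finset.sum_filter_add_sum_filter_not]
  have hlk : (k : ℝ) < l := by exact_mod_cast hkl
  rw [htotal, hFd]
  have hFt : (l : ℝ) - k ≤ ∑ j ∈ F, t j := by linarith
  linarith [hGd, hGC.symm ▸ hGd]

lemma stmt11_general (n k l : ℕ) (hk1 : 1 ≤ k) (hkl : k < l) (hln : l ≤ n)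
    (d : Fin n → ℝ)
    (hd1 : ∀ j : Fin n, (j : ℕ) < n - k → d j = 1)
    (hd2 : ∀ j : Fin n, ¬ (j : ℕ) < n - k → -(((l : ℝ) - k) / k) ≤ d j ∧ d j ≤ 0)
    (M : Matrix (Fin n) (Fin n) ℝ) (hM : M.IsHermitian) :
    sumLowEig n l (M - Matrix.diagonal d) ≤ sumLowEig n l M := by
  have hl1 : 1 ≤ l := le_trans hk1 (le_of_lt hkl)
  have hA : (M - Matrix.diagonal d).IsHermitian :=
    hM.sub (Matrix.isHermitian_diagonal d)
  set σ := Tuple.sort hM.eigenvalues with hσ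
  set U : Matrix (Fin n) (Fin n) ℝ := (hM.eigenvectorUnitary : Matrix (Fin n) (Fin n) ℝ)
    with hU
  have hsU : star U = Uᵀ := by
    rw [Matrix.star_eq_conjTranspose, Matrix.conjTranspose_eq_transpose_of_trivial]
  have hUtU : Uᵀ * U = 1 := by rw [← hsU]; exact Unitary.coe_star_mul_self _
  set V : Matrix (Fin n) (Fin l) ℝ := Matrix.of (fun j i => U j (σ (Fin.castLE hln i)))
    with hV
  have hVtV : Vᵀ * V = 1 := by
    ext i i'
    have h1 := congrFun (congrFun hUtU (σ (Fin.castLE hln i))) (σ (Fin.castLE hln i'))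
    simp only [Matrix.mul_apply, Matrix.transpose_apply] at h1 ⊢
    simp only [hV, Matrix.of_apply]
    rw [h1]
    by_cases h : i = i'
    · subst h; simp [Matrix.one_apply]
    · have hne : σ (Fin.castLE hln i) ≠ σ (Fin.castLE hln i') := by
        intro hcon
        exact h (Fin.ext (by simpa [Fin.ext_iff] using σ.injective hcon))
      simp [Matrix.one_apply, hne, h]
  -- columns of V are eigenvectors
  have hMV : Vᵀ * M * V
      = Matrix.diagonal (fun i : Fin l => hM.eigenvalues (σ (Fin.castLE hln i))) := by
    have hcol : ∀ i : Fin l,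
        (M *ᵥ fun j => V j i)
          = fun j => hM.eigenvalues (σ (Fin.castLE hln i)) * V j i := by
      intro i
      have hbe : (fun j => V j i) = ⇑(hM.eigenvectorBasis (σ (Fin.castLE hln i))) := by
        funext j
        simp only [hV, Matrix.of_apply, hU]
        exact Matrix.IsHermitian.eigenvectorUnitary_apply hM j (σ (Fin.castLE hln i))
      rw [hbe, hM.mulVec_eigenvectorBasis]
      funext j
      rw [Pi.smul_apply, smul_eq_mul, ← congrFun hbe j]
    ext i i'
    rw [Matrix.mul_assoc, Matrix.mul_apply]
    have hMVcol : ∀ j, (M * V) j i' = hM.eigenvalues (σ (Fin.castLE hln i')) * V j i' := by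
      intro j
      have := congrFun (hcol i') j
      simpa [Matrix.mulVec, Matrix.mul_apply, dotProduct] using this
    calc ∑ j, Vᵀ i j * (M * V) j i'
        = hM.eigenvalues (σ (Fin.castLE hln i')) * ∑ j, V j i * V j i' := by
          rw [Finset.mul_sum]
          refine Finset.sum_congr rfl fun j _ => ?_
          rw [hMVcol j, Matrix.transpose_apply]; ring
      _ = hM.eigenvalues (σ (Fin.castLE hln i')) * (1 : Matrix (Fin l) (Fin l) ℝ) i i' := by
          have := congrFun (congrFun hVtV i) i'
          simp only [Matrix.mul_apply, Matrix.transpose_apply] at this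
          rw [this]
      _ = Matrix.diagonal (fun i : Fin l => hM.eigenvalues (σ (Fin.castLE hln i))) i i' := by
          by_cases h : i = i'
          · subst h; simp [Matrix.one_apply]
          · simp [Matrix.one_apply, Matrix.diagonal_apply, h, Ne.symm h]
  have htrM : (Vᵀ * M * V).trace = sumLowEig n l M := by
    rw [hMV, Matrix.trace_diagonal]
    unfold sumLowEig sortedEig
    rw [dif_pos hM, sum_filter_lt hln]
    simp only [Function.comp, ← hσ]
  -- the diagonal part
  obtain ⟨hp0, hp1, hpsum⟩ := proj_diag_bounds V hVtV
  have htrD : (Vᵀ * Matrix.diagonal d * V).trace = ∑ j, d j * (V * Vᵀ) j j := by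
    rw [Matrix.trace_mul_comm, ← Matrix.mul_assoc]
    rw [Matrix.trace]
    refine Finset.sum_congr rfl fun j _ => ?_
    rw [Matrix.diag_apply, Matrix.mul_diagonal]
    ring
  have hDpos : 0 ≤ (Vᵀ * Matrix.diagonal d * V).trace := by
    rw [htrD]
    exact sum_d_t_nonneg hk1 hkl hln d _ hd1 hd2 hp0 hp1 hpsum
  have hsub : (Vᵀ * (M - Matrix.diagonal d) * V).trace
      = (Vᵀ * M * V).trace - (Vᵀ * Matrix.diagonal d * V).trace := by
    rw [Matrix.mul_sub, Matrix.sub_mul, Matrix.trace_sub]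
  calc sumLowEig n l (M - Matrix.diagonal d)
      ≤ (Vᵀ * (M - Matrix.diagonal d) * V).trace := kyFan hl1 hln hA V hVtV
    _ = (Vᵀ * M * V).trace - (Vᵀ * Matrix.diagonal d * V).trace := hsub
    _ ≤ (Vᵀ * M * V).trace := by linarith
    _ = sumLowEig n l M := htrM

end KyFanAux

/-- Lemma B.2. -/
theorem stmt_11 (n k l : ℕ) (hn : 2 ≤ n) (hk1 : 1 ≤ k) (hkl : k < l) (hln : l ≤ n)
    (δ : Fin k → ℝ) (hδpos : ∀ i, 0 < δ i) (hδle : ∀ i, δ i ≤ ((l : ℝ) - k) / k)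
    (M : Matrix (Fin n) (Fin n) ℝ) (hM : M.IsHermitian) :
    sumLowEig n l
      (M - Matrix.diagonal (fun i : Fin n =>
        if (i : ℕ) < n - k then (1 : ℝ)
        else -(δ ⟨(i : ℕ) - (n - k), by have := i.isLt; omega⟩))) ≤
      sumLowEig n l M := by
  refine stmt11_general n k l hk1 hkl hln _ ?_ ?_ M hM
  · intro j hj
    simp only [hj, if_pos]
  · intro j hj
    rw [if_neg hj]
    have h1 := hδpos ⟨(j : ℕ) - (n - k), by have := j.isLt; omega⟩
    have h2 := hδle ⟨(j : ℕ) - (n - k), by have := j.isLt; omega⟩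
    constructor
    · linarith
    · linarith
end
end

section
/- Let n ≥ 1, let Ω ⊂ ℝⁿ be an open set, and let u : Ω → ℝ be lower semicontinuous with inf_Ω u > −∞. Suppose that for every x̄ ∈ Ω there exists 0 < ε̄ < dist(x̄, ∂Ω) such that for every 0 < ε < ε̄ and every vector V ∈ ℝⁿ, the function w(x) := u(x) + V·x satisfies min_{B̄_ε(x̄)} w = min_{∂B_ε(x̄)} w. Then u ∈ A₁(Ω), i.e. u is viscosity 1-superaffine on Ω. -/
open Filter Metric Set MeasureTheory Topology

attribute [local instance] Matrix.normedAddCommGroup Matrix.normedSpace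

noncomputable section

/-- `u` is viscosity `k`-superaffine on `Ω` (`u ∈ A_k(Ω)`): `u` is lower semicontinuous
and bounded below on `Ω`, and whenever a `C²` test function `φ` touches `u` from below at a
point of `Ω`, the sum of the `k` smallest eigenvalues of `∇²φ` there is `≤ 0`. -/
def ViscositySuperaffine (n k : ℕ) (Ω : Set (EuclideanSpace ℝ (Fin n)))
    (u : EuclideanSpace ℝ (Fin n) → ℝ) : Prop :=
  LowerSemicontinuousOn u Ω ∧ BddBelow (u '' Ω) ∧
  ∀ φ : EuclideanSpace ℝ (Fin n) → ℝ, ContDiffOn ℝ 2 φ Ω → (∀ x ∈ Ω, φ x ≤ u x) →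
    ∀ x ∈ Ω, φ x = u x → sumLowEig n k (hessianMatrix n φ x) ≤ 0

section Aux

variable {n : ℕ}

/-- Rayleigh lower bound. -/
lemma rayleigh_lb (M : Matrix (Fin n) (Fin n) ℝ) (hM : M.IsHermitian) (μ : ℝ)
    (hμ : ∀ i, μ ≤ hM.eigenvalues i) (x : EuclideanSpace ℝ (Fin n)) :
    μ * ‖x‖ ^ 2 ≤ (inner ℝ x (Matrix.toEuclideanLin M x) : ℝ) := by
  set b := hM.eigenvectorBasis with hb
  set T := Matrix.toEuclideanLin M with hT
  have hTb : ∀ i, T (b i) = hM.eigenvalues i • b i := by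
    intro i
    ext j
    exact congrFun (hM.mulVec_eigenvectorBasis i) j
  have hsymm : (Matrix.toEuclideanLin M).IsSymmetric :=
    Matrix.isHermitian_iff_isSymmetric.1 hM
  have key : (inner ℝ x (T x) : ℝ)
      = ∑ i, hM.eigenvalues i * ((inner ℝ x (b i) : ℝ) * (inner ℝ (b i) x : ℝ)) := by
    rw [← b.sum_inner_mul_inner x (T x)]
    congr 1
    ext i
    have : (inner ℝ (b i) (T x) : ℝ) = inner ℝ (T (b i)) x := (hsymm (b i) x).symm
    rw [this, hTb i, real_inner_smul_left]
    ring
  have hnorm : ‖x‖ ^ 2 = ∑ i, (inner ℝ x (b i) : ℝ) * (inner ℝ (b i) x : ℝ) := by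
    rw [b.sum_inner_mul_inner x x, real_inner_self_eq_norm_sq]
  rw [key, hnorm, Finset.mul_sum]
  apply Finset.sum_le_sum
  intro i _
  have h1 : (0:ℝ) ≤ (inner ℝ x (b i) : ℝ) * (inner ℝ (b i) x : ℝ) := by
    rw [real_inner_comm (b i) x]; exact mul_self_nonneg _
  exact mul_le_mul_of_nonneg_right (hμ i) h1

lemma bilin_eq (B : EuclideanSpace ℝ (Fin n) →L[ℝ] EuclideanSpace ℝ (Fin n) →L[ℝ] ℝ)
    (hsB : ∀ i j, B (EuclideanSpace.single i 1) (EuclideanSpace.single j 1)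
      = B (EuclideanSpace.single j 1) (EuclideanSpace.single i 1)) (h : EuclideanSpace ℝ (Fin n)) :
    B h h = (inner ℝ h (Matrix.toEuclideanLin
      (Matrix.of fun i j => B (EuclideanSpace.single i 1) (EuclideanSpace.single j 1)) h) : ℝ) := by
  have hdecomp : h = ∑ i, h i • EuclideanSpace.single i (1:ℝ) := by
    simpa [EuclideanSpace.basisFun_apply, EuclideanSpace.basisFun_repr] using
      ((EuclideanSpace.basisFun (Fin n) ℝ).sum_repr h).symm
  have exp : ∀ (L : EuclideanSpace ℝ (Fin n) →L[ℝ] ℝ),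
      L h = ∑ i, h i * L (EuclideanSpace.single i 1) := by
    intro L
    conv_lhs => rw [hdecomp]
    rw [map_sum]
    simp [smul_eq_mul]
  have lhs_eq : B h h
      = ∑ i, h i * ∑ j, h j * B (EuclideanSpace.single j 1) (EuclideanSpace.single i 1) := by
    rw [exp (B h)]
    refine Finset.sum_congr rfl fun i _ => ?_
    congr 1
    have : (B h) (EuclideanSpace.single i 1) = (B.flip (EuclideanSpace.single i 1)) h := rfl
    rw [this, exp (B.flip (EuclideanSpace.single i 1))]
    rfl
  rw [lhs_eq, PiLp.inner_apply]
  simp only [RCLike.inner_apply, conj_trivial]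
  refine Finset.sum_congr rfl fun i _ => ?_
  have hT : (Matrix.toEuclideanLin
      (Matrix.of fun i j => B (EuclideanSpace.single i 1) (EuclideanSpace.single j 1)) h) i
      = ∑ j, B (EuclideanSpace.single i 1) (EuclideanSpace.single j 1) * h j := rfl
  rw [hT, Finset.mul_sum, Finset.sum_mul]
  refine Finset.sum_congr rfl fun j _ => ?_
  rw [hsB j i]
  ring

lemma filter_lt_one (hn : 1 ≤ n) :
    (Finset.univ.filter fun i : Fin n => (i : ℕ) < 1) = {(⟨0, hn⟩ : Fin n)} := by
  ext i
  simp only [Finset.mem_filter, Finset.mem_univ, true_and, Finset.mem_singleton, Fin.ext_iff]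
  omega

lemma sortedEig_min (hn : 1 ≤ n) (M : Matrix (Fin n) (Fin n) ℝ) (hM : M.IsHermitian) :
    ∀ j, sortedEig n M ⟨0, hn⟩ ≤ hM.eigenvalues j := by
  intro j
  unfold sortedEig
  rw [dif_pos hM]
  have : j = Tuple.sort hM.eigenvalues ((Tuple.sort hM.eigenvalues).symm j) := by simp
  rw [this]
  exact Tuple.monotone_sort hM.eigenvalues (by simp [Fin.le_def])

end Aux

set_option maxHeartbeats 2000000 in
/-- Lemma D.3: the local minimum-principle characterization implies
viscosity 1-superaffinity. -/
theorem stmt_14 (n : ℕ) (hn : 1 ≤ n)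
    (Ω : Set (EuclideanSpace ℝ (Fin n))) (hΩopen : IsOpen Ω)
    (u : EuclideanSpace ℝ (Fin n) → ℝ)
    (hlsc : LowerSemicontinuousOn u Ω) (hbdd : BddBelow (u '' Ω))
    (h : ∀ x ∈ Ω, ∃ εb : ℝ, 0 < εb ∧ closedBall x εb ⊆ Ω ∧
      ∀ ε : ℝ, 0 < ε → ε < εb → ∀ V : EuclideanSpace ℝ (Fin n),
        ∃ m : ℝ, IsLeast ((fun y => u y + (inner ℝ V y : ℝ)) '' closedBall x ε) m ∧
          IsLeast ((fun y => u y + (inner ℝ V y : ℝ)) '' sphere x ε) m) :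
    ViscositySuperaffine n 1 Ω u := by
  refine ⟨hlsc, hbdd, ?_⟩
  intro φ hφ hφle xb hxb hφeq
  by_contra hpos
  push_neg at hpos
  set H := hessianMatrix n φ xb with hHdef
  have hφx : ContDiffAt ℝ 2 φ xb := (hφ xb hxb).contDiffAt (hΩopen.mem_nhds hxb)
  have hφdiff : ∀ y ∈ Ω, DifferentiableAt ℝ φ y := fun y hy =>
    ((hφ y hy).contDiffAt (hΩopen.mem_nhds hy)).differentiableAt two_ne_zero
  have hsymm : ∀ v w, fderiv ℝ (fderiv ℝ φ) xb v w = fderiv ℝ (fderiv ℝ φ) xb w v :=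
    hφx.isSymmSndFDerivAt (by simp [minSmoothness_of_isRCLikeNormedField])
  set B := fderiv ℝ (fderiv ℝ φ) xb with hBdef
  have hBH : ∀ i j, B (EuclideanSpace.single i 1) (EuclideanSpace.single j 1) = H i j := by
    intro i j
    rw [hHdef]
    show _ = iteratedFDeriv ℝ 2 φ xb ![EuclideanSpace.single i 1, EuclideanSpace.single j 1]
    rw [iteratedFDeriv_two_apply]
    simp [hBdef]
  have hH : H.IsHermitian := by
    show H.conjTranspose = H
    ext i j
    rw [Matrix.conjTranspose_apply, star_trivial, ← hBH i j, ← hBH j i]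
    exact hsymm _ _
  set μ := sortedEig n H ⟨0, hn⟩ with hμdef
  have hμpos : 0 < μ := by
    have he : sumLowEig n 1 H = μ := by
      unfold sumLowEig
      rw [filter_lt_one hn, Finset.sum_singleton]
    rw [he] at hpos
    exact hpos
  have hMH : (Matrix.of fun i j =>
      B (EuclideanSpace.single i 1) (EuclideanSpace.single j 1)) = H := by
    ext i j
    exact hBH i j
  have hQ : ∀ v : EuclideanSpace ℝ (Fin n), μ * ‖v‖ ^ 2 ≤ B v v := by
    intro v
    have h2 := bilin_eq B (fun i j => hsymm _ _) v
    rw [hMH] at h2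
    rw [h2]
    exact rayleigh_lb H hH μ (sortedEig_min hn H hH) v
  -- the shifted test function
  set V : EuclideanSpace ℝ (Fin n) :=
    -((InnerProductSpace.toDual ℝ (EuclideanSpace ℝ (Fin n))).symm (fderiv ℝ φ xb)) with hVdef
  have hVy : ∀ y, (inner ℝ V y : ℝ) = -(fderiv ℝ φ xb y) := by
    intro y
    rw [hVdef, inner_neg_left, InnerProductSpace.toDual_symm_apply]
  set ψ : EuclideanSpace ℝ (Fin n) → ℝ := fun y => φ y + (inner ℝ V y : ℝ) with hψdef
  set g : EuclideanSpace ℝ (Fin n) → (EuclideanSpace ℝ (Fin n) →L[ℝ] ℝ) :=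
    fun y => fderiv ℝ φ y + innerSL ℝ V with hgdef
  have hg : ∀ y ∈ Ω, HasFDerivAt ψ (g y) y := by
    intro y hy
    exact (hφdiff y hy).hasFDerivAt.add ((innerSL ℝ V).hasFDerivAt)
  have hgcont : ContinuousOn g Ω :=
    (hφ.continuousOn_fderiv_of_isOpen hΩopen one_le_two).add continuousOn_const
  have hgdiffx : DifferentiableAt ℝ g xb := by
    have h1 : ContDiffAt ℝ 1 (fderiv ℝ φ) xb := hφx.fderiv_right (by norm_num)
    exact (h1.differentiableAt one_ne_zero).add_const _
  have hB2 : HasFDerivAt g B xb := by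
    have he : fderiv ℝ g xb = B := by
      rw [hgdef, hBdef]
      exact fderiv_add_const _
    exact he ▸ hgdiffx.hasFDerivAt
  have hg0 : g xb = 0 := by
    ext y
    show fderiv ℝ φ xb y + (innerSL ℝ V) y = (0 : EuclideanSpace ℝ (Fin n) →L[ℝ] ℝ) y
    rw [ContinuousLinearMap.zero_apply, innerSL_apply_apply, hVy]
    ring
  -- the little-o bound
  have hlo : ∀ᶠ y in 𝓝 xb, ‖g y - g xb - B (y - xb)‖ ≤ μ / 2 * ‖y - xb‖ :=
    hB2.isLittleO.def (half_pos hμpos)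
  obtain ⟨δ, hδpos, hδ⟩ := Metric.eventually_nhds_iff.1 hlo
  obtain ⟨εb, hεbpos, hεbΩ, hmin⟩ := h xb hxb
  set ε := min (εb / 2) (δ / 2) with hεdef
  have hεpos : 0 < ε := lt_min (by linarith) (by linarith)
  have hεεb : ε < εb := lt_of_le_of_lt (min_le_left _ _) (by linarith)
  have hεδ : ε < δ := lt_of_le_of_lt (min_le_right _ _) (by linarith)
  have hball : closedBall xb ε ⊆ Ω :=
    (closedBall_subset_closedBall hεεb.le).trans hεbΩ
  -- strict minimum on sphere
  have key : ∀ y ∈ sphere xb ε, ψ xb < ψ y := by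
    intro y hy
    set hv := y - xb with hhv
    have hnv : ‖hv‖ = ε := by
      rw [hhv, ← dist_eq_norm]
      exact mem_sphere.1 hy
    have hmem : ∀ t ∈ Icc (0:ℝ) 1, xb + t • hv ∈ closedBall xb ε := by
      intro t ht
      rw [mem_closedBall, dist_eq_norm, add_sub_cancel_left, norm_smul,
        Real.norm_eq_abs, abs_of_nonneg ht.1, hnv]
      nlinarith [ht.2, hεpos]
    have hF : ∀ t ∈ Icc (0:ℝ) 1, HasDerivAt (fun t : ℝ => ψ (xb + t • hv))
        (g (xb + t • hv) hv) t := by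
      intro t ht
      have hline : HasDerivAt (fun s : ℝ => xb + s • hv) hv t := by
        simpa using ((hasDerivAt_id t).smul_const hv).const_add xb
      exact (hg _ (hball (hmem t ht))).comp_hasDerivAt t hline
    have hcont : ContinuousOn (fun t : ℝ => g (xb + t • hv) hv) (Icc 0 1) := by
      have hpath : ContinuousOn (fun t : ℝ => xb + t • hv) (Icc 0 1) :=
        (continuous_const.add (continuous_id.smul continuous_const)).continuousOn
      have hcg : ContinuousOn (fun t : ℝ => g (xb + t • hv)) (Icc 0 1) :=
        hgcont.comp hpath fun t ht => hball (hmem t ht)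
      exact (ContinuousLinearMap.apply ℝ ℝ hv).continuous.comp_continuousOn hcg
    have hint : IntervalIntegrable (fun t : ℝ => g (xb + t • hv) hv) volume 0 1 := by
      apply ContinuousOn.intervalIntegrable
      rwa [uIcc_of_le zero_le_one]
    have heq : ∫ t in (0:ℝ)..1, g (xb + t • hv) hv
        = ψ (xb + (1:ℝ) • hv) - ψ (xb + (0:ℝ) • hv) := by
      apply intervalIntegral.integral_eq_sub_of_hasDerivAt (f := fun t : ℝ => ψ (xb + t • hv))
      · intro t ht
        rw [uIcc_of_le zero_le_one] at ht
        exact hF t ht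
      · exact hint
    have hpoint : ∀ t ∈ Icc (0:ℝ) 1, t * (μ / 2 * ‖hv‖ ^ 2) ≤ g (xb + t • hv) hv := by
      intro t ht
      have hdist : dist (xb + t • hv) xb < δ := by
        rw [dist_eq_norm, add_sub_cancel_left, norm_smul, Real.norm_eq_abs,
          abs_of_nonneg ht.1, hnv]
        nlinarith [ht.2, hεpos, hεδ]
      have hb := hδ hdist
      rw [add_sub_cancel_left] at hb
      have happ : ‖(g (xb + t • hv) - g xb - B (t • hv)) hv‖
          ≤ (μ / 2 * ‖t • hv‖) * ‖hv‖ := by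
        calc ‖(g (xb + t • hv) - g xb - B (t • hv)) hv‖
            ≤ ‖g (xb + t • hv) - g xb - B (t • hv)‖ * ‖hv‖ :=
              ContinuousLinearMap.le_opNorm _ _
          _ ≤ (μ / 2 * ‖t • hv‖) * ‖hv‖ :=
              mul_le_mul_of_nonneg_right hb (norm_nonneg _)
      have hexp : g (xb + t • hv) hv
          = (g (xb + t • hv) - g xb - B (t • hv)) hv + t * (B hv hv) := by
        rw [ContinuousLinearMap.sub_apply, ContinuousLinearMap.sub_apply, hg0,
          ContinuousLinearMap.zero_apply, B.map_smul, ContinuousLinearMap.smul_apply,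
          smul_eq_mul]
        ring
      have hsn : ‖t • hv‖ = t * ‖hv‖ := by
        rw [norm_smul, Real.norm_eq_abs, abs_of_nonneg ht.1]
      rw [hexp]
      have h1 : -(μ / 2 * (t * ‖hv‖) * ‖hv‖) ≤ (g (xb + t • hv) - g xb - B (t • hv)) hv := by
        have := neg_abs_le ((g (xb + t • hv) - g xb - B (t • hv)) hv)
        rw [hsn] at happ
        have h2 : |(g (xb + t • hv) - g xb - B (t • hv)) hv| ≤ μ / 2 * (t * ‖hv‖) * ‖hv‖ := happ
        linarith [neg_le_neg h2, neg_abs_le ((g (xb + t • hv) - g xb - B (t • hv)) hv)]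
      have h3 : t * (μ * ‖hv‖ ^ 2) ≤ t * (B hv hv) :=
        mul_le_mul_of_nonneg_left (hQ hv) ht.1
      nlinarith [h1, h3]
    have hintlow : IntervalIntegrable (fun t : ℝ => t * (μ / 2 * ‖hv‖ ^ 2)) volume 0 1 :=
      (continuous_id.mul continuous_const).intervalIntegrable 0 1
    have hlowval : ∫ t in (0:ℝ)..1, t * (μ / 2 * ‖hv‖ ^ 2) = μ / 4 * ‖hv‖ ^ 2 := by
      rw [intervalIntegral.integral_mul_const, integral_id]
      ring
    have hmono := intervalIntegral.integral_mono_on zero_le_one hintlow hint hpoint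
    rw [hlowval, heq] at hmono
    have hy_eq : xb + (1:ℝ) • hv = y := by
      rw [one_smul, hhv]
      abel
    have hx_eq : xb + (0:ℝ) • hv = xb := by rw [zero_smul, add_zero]
    rw [hy_eq, hx_eq] at hmono
    have hthis : 0 < μ / 4 * ‖hv‖ ^ 2 := by
      rw [hnv]
      positivity
    exact sub_pos.1 (lt_of_lt_of_le hthis hmono)
  -- derive contradiction from the minimum principle
  obtain ⟨m, hm1, hm2⟩ := hmin ε hεpos hεεb V
  obtain ⟨y₀, hy₀, hy₀m⟩ := hm2.1
  have h1 : m ≤ u xb + (inner ℝ V xb : ℝ) :=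
    hm1.2 ⟨xb, mem_closedBall_self hεpos.le, rfl⟩
  have hy₀Ω : y₀ ∈ Ω := hball (sphere_subset_closedBall hy₀)
  have h2 : ψ y₀ ≤ u y₀ + (inner ℝ V y₀ : ℝ) :=
    add_le_add_left (hφle y₀ hy₀Ω) _
  have h3 : ψ xb < ψ y₀ := key y₀ hy₀
  have h4 : ψ xb = u xb + (inner ℝ V xb : ℝ) := by
    show φ xb + (inner ℝ V xb : ℝ) = _
    rw [hφeq]
  have h5 : u y₀ + (inner ℝ V y₀ : ℝ) = m := hy₀m
  linarith
end
end

section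
/- Let n ≥ 1, let Ω ⊂ ℝⁿ be a bounded domain with diameter d, let C ≥ 0 be a constant, and let u : Ω → ℝ be canonical quasi-superharmonic with constant C. Let ω : [0, 2d) → [0, ∞) be a continuous nondecreasing function. Suppose x̄, ȳ ∈ Ω are such that the closed ball of radius 2|x̄ − ȳ| centered at x̄ is contained in Ω, and p, q ∈ ℝⁿ satisfy u(y) ≥ u(x̄) + p·(y − x̄) − |y − x̄| ω(|y − x̄|) for all y ∈ Ω and u(y) ≥ u(ȳ) + q·(y − ȳ) − |y − ȳ| ω(|y − ȳ|) for all y ∈ Ω. Then there exists a constant C₁ depending only on n and C such that |p − q| ≤ C₁ ω(2|x̄ − ȳ|) + C₁ |x̄ − ȳ|. -/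
open Filter Metric Set MeasureTheory Topology

attribute [local instance] Matrix.normedAddCommGroup Matrix.normedSpace

noncomputable section

/-- `u` is canonical quasi-superharmonic with constant `C` on `Ω`: `u` is locally integrable
on `Ω` and `u(x) - (C/2n)|x|²` satisfies the super-mean-value inequality on every ball
`B_r(x)` with `x ∈ Ω` and `0 < r < dist(x, ∂Ω)`. -/
def CanonicalQuasiSuperharmonic (n : ℕ) (C : ℝ) (Ω : Set (EuclideanSpace ℝ (Fin n)))
    (u : EuclideanSpace ℝ (Fin n) → ℝ) : Prop :=
  MeasureTheory.LocallyIntegrableOn u Ω ∧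
  ∀ x ∈ Ω, ∀ r : ℝ, 0 < r → r < Metric.infDist x Ωᶜ →
    (⨍ y in Metric.ball x r, (u y - (C / (2 * n)) * ‖y‖ ^ 2)) ≤ u x - (C / (2 * n)) * ‖x‖ ^ 2

variable {n : ℕ}
local notation "E" => EuclideanSpace ℝ (Fin n)

lemma integral_inner_sub_center (v z : E) (r : ℝ) :
    ∫ y in ball z r, (inner ℝ v (y - z) : ℝ) = 0 := by
  have h0 : ∫ y in ball (0:E) r, (inner ℝ v y : ℝ) = 0 := by
    have hneg : ∫ y in ball (0:E) r, (inner ℝ v y : ℝ)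
        = - ∫ y in ball (0:E) r, (inner ℝ v y : ℝ) := by
      conv_lhs => rw [← integral_indicator measurableSet_ball,
        ← integral_neg_eq_self (fun y => (ball (0:E) r).indicator (fun y => (inner ℝ v y : ℝ)) y) volume]
      rw [← integral_neg, ← integral_indicator measurableSet_ball]
      congr 1 with y
      by_cases hy : y ∈ ball (0:E) r
      · have hy' : -y ∈ ball (0:E) r := by simpa using hy
        simp [indicator_of_mem, hy, hy', inner_neg_right]
      · have hy' : -y ∉ ball (0:E) r := by simpa using hy
        simp [indicator_of_notMem, hy, hy']
    linarith
  have ht : ∫ y in ball z r, (inner ℝ v (y - z) : ℝ)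
      = ∫ y in ball (0:E) r, (inner ℝ v y : ℝ) := by
    rw [← integral_indicator measurableSet_ball, ← integral_indicator measurableSet_ball]
    rw [← integral_add_right_eq_self
      (fun y => (ball z r).indicator (fun y => (inner ℝ v (y - z) : ℝ)) y) z]
    congr 1 with y
    by_cases hy : y ∈ ball (0:E) r
    · have hy' : y + z ∈ ball z r := by
        simpa [mem_ball, dist_eq_norm] using hy
      simp [indicator_of_mem, hy, hy']
    · have hy' : y + z ∉ ball z r := by
        simpa [mem_ball, dist_eq_norm] using hy
      simp [indicator_of_notMem, hy, hy']
  rw [ht, h0]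

lemma cont_integrableOn_ball {f : E → ℝ} (hf : Continuous f) (z : E) (r : ℝ) :
    IntegrableOn f (ball z r) volume :=
  (hf.continuousOn.integrableOn_compact (isCompact_closedBall z r)).mono_set
    ball_subset_closedBall

lemma const_integrableOn_ball (c : ℝ) (z : E) (r : ℝ) :
    IntegrableOn (fun _ : E => c) (ball z r) volume :=
  integrableOn_const measure_ball_lt_top.ne

lemma inner_cont (w z : E) : Continuous fun y : E => (inner ℝ w (y - z) : ℝ) :=
  continuous_const.inner (continuous_sub_right z)

lemma integral_plane_ball (a : ℝ) (w x0 z : E) (r : ℝ) :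
    ∫ y in ball z r, (a + (inner ℝ w (y - x0) : ℝ))
      = (volume (ball z r)).toReal * (a + (inner ℝ w (z - x0) : ℝ)) := by
  have h1 : (fun y : E => a + (inner ℝ w (y - x0) : ℝ))
      = fun y => (a + (inner ℝ w (z - x0) : ℝ)) + (inner ℝ w (y - z) : ℝ) := by
    funext y
    have : (inner ℝ w (y - x0) : ℝ) = (inner ℝ w (z - x0) : ℝ) + (inner ℝ w (y - z) : ℝ) := by
      rw [← inner_add_right]; congr 1; abel
    rw [this]; ring
  rw [h1, integral_add (const_integrableOn_ball _ _ _)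
      (cont_integrableOn_ball (inner_cont w z) z r),
    integral_inner_sub_center, setIntegral_const]
  simp [smul_eq_mul, measureReal_def]

lemma integral_normsq_ball_le (z : E) {r : ℝ} (hr : 0 ≤ r) :
    ∫ y in ball z r, ‖y‖ ^ 2
      ≤ (volume (ball z r)).toReal * (‖z‖ ^ 2 + r ^ 2) := by
  have hint : IntegrableOn (fun y : E => ‖y‖ ^ 2) (ball z r) volume :=
    cont_integrableOn_ball (by continuity) z r
  have hineq : ∀ y ∈ ball z r, ‖y‖ ^ 2
      ≤ (‖z‖ ^ 2 + r ^ 2) + (inner ℝ ((2:ℝ) • z) (y - z) : ℝ) := by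
    intro y hy
    have hy' : ‖y - z‖ ≤ r := le_of_lt (by simpa [mem_ball, dist_eq_norm] using hy)
    have hexp : ‖y‖ ^ 2 = ‖z‖ ^ 2 + 2 * (inner ℝ z (y - z) : ℝ) + ‖y - z‖ ^ 2 := by
      have := norm_add_sq_real z (y - z)
      simpa [add_sub_cancel] using this
    have h2 : ‖y - z‖ ^ 2 ≤ r ^ 2 := by
      have := pow_le_pow_left₀ (norm_nonneg _) hy' 2
      simpa using this
    rw [hexp]
    have h3 : (inner ℝ ((2:ℝ) • z) (y - z) : ℝ) = 2 * (inner ℝ z (y - z) : ℝ) := by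
      rw [real_inner_smul_left]
    rw [h3]; linarith
  calc ∫ y in ball z r, ‖y‖ ^ 2
      ≤ ∫ y in ball z r, ((‖z‖ ^ 2 + r ^ 2) + (inner ℝ ((2:ℝ) • z) (y - z) : ℝ)) := by
        apply setIntegral_mono_on hint _ measurableSet_ball hineq
        exact (const_integrableOn_ball _ _ _).add
          (cont_integrableOn_ball (inner_cont _ z) z r)
    _ = (volume (ball z r)).toReal * (‖z‖ ^ 2 + r ^ 2) := by
        rw [integral_add (const_integrableOn_ball _ _ _)
          (cont_integrableOn_ball (inner_cont _ z) z r),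
          integral_inner_sub_center, setIntegral_const]
        simp [smul_eq_mul, measureReal_def]

lemma closedBall_subset_of_infDist {Ω : Set E} {z : E} {ρ : ℝ}
    (h : ρ < infDist z Ωᶜ) : closedBall z ρ ⊆ Ω := by
  intro w hw
  by_contra hwn
  have : infDist z Ωᶜ ≤ dist z w := infDist_le_dist_of_mem hwn
  rw [dist_comm] at this
  exact absurd (lt_of_lt_of_le h this) (not_lt.2 hw)

lemma superharm_int {Ω : Set E} {u : E → ℝ} {C : ℝ} (hC : 0 ≤ C)
    (hloc : LocallyIntegrableOn u Ω volume)
    (hmv : ∀ x ∈ Ω, ∀ r : ℝ, 0 < r → r < infDist x Ωᶜ →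
      (⨍ y in ball x r, (u y - (C / (2 * n)) * ‖y‖ ^ 2)) ≤ u x - (C / (2 * n)) * ‖x‖ ^ 2)
    {z : E} (hz : z ∈ Ω) {ρ : ℝ} (hρ : 0 < ρ) (hρ' : ρ < infDist z Ωᶜ) :
    ∫ y in ball z ρ, u y ≤ (volume (ball z ρ)).toReal * (u z + (C / (2 * n)) * ρ ^ 2) := by
  set c : ℝ := C / (2 * n) with hc
  have hc0 : 0 ≤ c := div_nonneg hC (by positivity)
  have hsub : closedBall z ρ ⊆ Ω := closedBall_subset_of_infDist hρ'
  have huint : IntegrableOn u (ball z ρ) volume :=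
    (hloc.integrableOn_compact_subset hsub (isCompact_closedBall z ρ)).mono_set
      ball_subset_closedBall
  have hnint : IntegrableOn (fun y : E => c * ‖y‖ ^ 2) (ball z ρ) volume :=
    cont_integrableOn_ball (by continuity) z ρ
  have hvolpos : 0 < (volume (ball z ρ)).toReal :=
    ENNReal.toReal_pos (measure_ball_pos volume z hρ).ne' measure_ball_lt_top.ne
  have havg := hmv z hz ρ hρ hρ'
  rw [setAverage_eq, measureReal_def] at havg
  have hint1 : ∫ y in ball z ρ, (u y - c * ‖y‖ ^ 2)
      ≤ (volume (ball z ρ)).toReal * (u z - c * ‖z‖ ^ 2) := by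
    have := smul_le_smul_of_nonneg_left havg (le_of_lt hvolpos)
    rw [smul_inv_smul₀ hvolpos.ne'] at this
    · simpa [smul_eq_mul] using this
  have hsub' : ∫ y in ball z ρ, (u y - c * ‖y‖ ^ 2)
      = (∫ y in ball z ρ, u y) - ∫ y in ball z ρ, c * ‖y‖ ^ 2 := integral_sub huint hnint
  have h2 : ∫ y in ball z ρ, c * ‖y‖ ^ 2
      ≤ (volume (ball z ρ)).toReal * (c * (‖z‖ ^ 2 + ρ ^ 2)) := by
    rw [integral_const_mul]
    calc c * ∫ y in ball z ρ, ‖y‖ ^ 2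
        ≤ c * ((volume (ball z ρ)).toReal * (‖z‖ ^ 2 + ρ ^ 2)) :=
          mul_le_mul_of_nonneg_left (integral_normsq_ball_le z hρ.le) hc0
      _ = (volume (ball z ρ)).toReal * (c * (‖z‖ ^ 2 + ρ ^ 2)) := by ring
  have hfin : ∫ y in ball z ρ, u y
      ≤ (volume (ball z ρ)).toReal * (u z - c * ‖z‖ ^ 2)
        + (volume (ball z ρ)).toReal * (c * (‖z‖ ^ 2 + ρ ^ 2)) := by linarith
  calc ∫ y in ball z ρ, u y
      ≤ (volume (ball z ρ)).toReal * (u z - c * ‖z‖ ^ 2)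
        + (volume (ball z ρ)).toReal * (c * (‖z‖ ^ 2 + ρ ^ 2)) := hfin
    _ = (volume (ball z ρ)).toReal * (u z + c * ρ ^ 2) := by ring

lemma euclidean_nontrivial (hn : 1 ≤ n) : Nontrivial (EuclideanSpace ℝ (Fin n)) := by
  refine ⟨⟨EuclideanSpace.single (⟨0, hn⟩ : Fin n) (1:ℝ), 0, ?_⟩⟩
  intro h
  have := congrArg (fun v : EuclideanSpace ℝ (Fin n) => v ⟨0, hn⟩) h
  simp [EuclideanSpace.single] at this

lemma vol_ball_ratio (hn : 1 ≤ n) (z c : E) {ρ : ℝ} (hρ : 0 < ρ) :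
    (volume (ball c (ρ / 16))).toReal
      = (16:ℝ)⁻¹ ^ n * (volume (ball z ρ)).toReal := by
  haveI := euclidean_nontrivial hn
  rw [Measure.addHaar_ball volume c (by positivity : (0:ℝ) ≤ ρ / 16),
    Measure.addHaar_ball volume z hρ.le, finrank_euclideanSpace_fin]
  rw [ENNReal.toReal_mul, ENNReal.toReal_mul, ENNReal.toReal_ofReal (by positivity),
    ENNReal.toReal_ofReal (by positivity)]
  rw [div_eq_inv_mul, mul_pow]
  ring

lemma cap_bound (hn : 1 ≤ n) {w : E} (hw : w ≠ 0) {s ρ : ℝ} (hρ : 0 < ρ)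
    (hs : s ≤ ‖w‖ * ((16 / 15) * ρ) / 2) (z : E) :
    (volume (ball z ρ)).toReal * (s + (16:ℝ)⁻¹ ^ n * (‖w‖ * ρ / 4))
      ≤ ∫ y in ball z ρ, max (s + (inner ℝ w (y - z) : ℝ)) 0 := by
  set m : ℝ := ‖w‖ with hm
  have hm0 : 0 < m := norm_pos_iff.2 hw
  set c : E := z - ((7 / 8) * ρ / m) • w with hcdef
  -- the small ball is inside the big one
  have hsubset : ball c (ρ / 16) ⊆ ball z ρ := by
    intro y hy
    have h1 : dist y c < ρ / 16 := hy
    have h2 : dist c z = (7 / 8) * ρ := by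
      rw [hcdef, dist_eq_norm]
      simp only [sub_sub_cancel_left, norm_neg, norm_smul]
      rw [Real.norm_eq_abs, abs_of_nonneg (by positivity), div_mul_cancel₀]
      exact hm0.ne'
    calc dist y z ≤ dist y c + dist c z := dist_triangle y c z
      _ < ρ / 16 + (7 / 8) * ρ := by rw [h2]; linarith
      _ ≤ ρ := by linarith
  -- pointwise bound on the small ball
  have hpt : ∀ y ∈ ball c (ρ / 16), m * ρ / 4 ≤ max (-(s + (inner ℝ w (y - z) : ℝ))) 0 := by
    intro y hy
    have hyc : ‖y - c‖ < ρ / 16 := by exact mem_ball_iff_norm.1 hy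
    have hdecomp : (inner ℝ w (y - z) : ℝ)
        = (inner ℝ w (y - c) : ℝ) + (inner ℝ w (c - z) : ℝ) := by
      rw [← inner_add_right]; congr 1; abel
    have hcz : (inner ℝ w (c - z) : ℝ) = -((7 / 8) * ρ * m) := by
      rw [hcdef]
      have : (z - ((7 / 8) * ρ / m) • w) - z = -(((7 / 8) * ρ / m) • w) := by abel
      rw [this, inner_neg_right, real_inner_smul_right, real_inner_self_eq_norm_sq]
      field_simp
      ring
    have hyc' : (inner ℝ w (y - c) : ℝ) ≤ m * (ρ / 16) := by
      calc (inner ℝ w (y - c) : ℝ) ≤ ‖w‖ * ‖y - c‖ := real_inner_le_norm w (y - c)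
        _ ≤ m * (ρ / 16) := by
            exact mul_le_mul_of_nonneg_left hyc.le hm0.le
    have hL : s + (inner ℝ w (y - z) : ℝ) ≤ -(m * ρ / 4) := by
      rw [hdecomp, hcz]
      nlinarith [hm0, hρ]
    have : m * ρ / 4 ≤ -(s + (inner ℝ w (y - z) : ℝ)) := by linarith
    exact le_trans this (le_max_left _ _)
  -- split max L 0 = L + max (-L) 0
  have hmaxeq : (fun y : E => max (s + (inner ℝ w (y - z) : ℝ)) 0)
      = fun y => (s + (inner ℝ w (y - z) : ℝ)) + max (-(s + (inner ℝ w (y - z) : ℝ))) 0 := by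
    funext y
    rcases le_total (s + (inner ℝ w (y - z) : ℝ)) 0 with h | h
    · rw [max_eq_right h, max_eq_left (by linarith)]; ring
    · rw [max_eq_left h, max_eq_right (by linarith)]; ring
  have hcontL : Continuous fun y : E => s + (inner ℝ w (y - z) : ℝ) :=
    continuous_const.add (inner_cont w z)
  have hcontM : Continuous fun y : E => max (-(s + (inner ℝ w (y - z) : ℝ))) 0 :=
    (hcontL.neg).max continuous_const
  rw [hmaxeq, integral_add (cont_integrableOn_ball hcontL z ρ)
    (cont_integrableOn_ball hcontM z ρ)]
  have hplane : ∫ y in ball z ρ, (s + (inner ℝ w (y - z) : ℝ))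
      = (volume (ball z ρ)).toReal * s := by
    rw [integral_plane_ball s w z z ρ]
    simp
  have hcap : (volume (ball z ρ)).toReal * ((16:ℝ)⁻¹ ^ n * (m * ρ / 4))
      ≤ ∫ y in ball z ρ, max (-(s + (inner ℝ w (y - z) : ℝ))) 0 := by
    have step1 : ∫ y in ball c (ρ / 16), max (-(s + (inner ℝ w (y - z) : ℝ))) 0
        ≤ ∫ y in ball z ρ, max (-(s + (inner ℝ w (y - z) : ℝ))) 0 := by
      apply setIntegral_mono_set (cont_integrableOn_ball hcontM z ρ)
      · filter_upwards with y using le_max_right _ _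
      · exact HasSubset.Subset.eventuallyLE hsubset
    have step2 : (volume (ball c (ρ / 16))).toReal * (m * ρ / 4)
        ≤ ∫ y in ball c (ρ / 16), max (-(s + (inner ℝ w (y - z) : ℝ))) 0 := by
      have := setIntegral_mono_on
        (const_integrableOn_ball _ _ _)
        (cont_integrableOn_ball hcontM c (ρ / 16)) measurableSet_ball
        (fun y hy => hpt y hy)
      simpa [setIntegral_const, smul_eq_mul, measureReal_def] using this
    have hratio := vol_ball_ratio hn z c hρ
    calc (volume (ball z ρ)).toReal * ((16:ℝ)⁻¹ ^ n * (m * ρ / 4))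
        = (volume (ball c (ρ / 16))).toReal * (m * ρ / 4) := by rw [hratio]; ring
      _ ≤ _ := le_trans step2 step1
  rw [hplane]
  have : (volume (ball z ρ)).toReal * (s + (16:ℝ)⁻¹ ^ n * (m * ρ / 4))
      = (volume (ball z ρ)).toReal * s
        + (volume (ball z ρ)).toReal * ((16:ℝ)⁻¹ ^ n * (m * ρ / 4)) := by ring
  rw [this]
  exact add_le_add_right hcap _

lemma key_budget (hn : 1 ≤ n) {C : ℝ} (hC : 0 ≤ C) {Ω : Set E} {u : E → ℝ}
    (hloc : LocallyIntegrableOn u Ω volume)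
    (hmv : ∀ x ∈ Ω, ∀ r : ℝ, 0 < r → r < infDist x Ωᶜ →
      (⨍ y in ball x r, (u y - (C / (2 * n)) * ‖y‖ ^ 2)) ≤ u x - (C / (2 * n)) * ‖x‖ ^ 2)
    {D : ℝ} {ω : ℝ → ℝ} (hmono : MonotoneOn ω (Ico 0 D))
    (hnn : ∀ t ∈ Ico (0:ℝ) D, 0 ≤ ω t)
    {z₁ z₂ : E} (hz₁ : z₁ ∈ Ω)
    {p₁ p₂ : E}
    (hp₁ : ∀ y ∈ Ω, u z₁ + (inner ℝ p₁ (y - z₁) : ℝ) - ‖y - z₁‖ * ω ‖y - z₁‖ ≤ u y)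
    (hp₂ : ∀ y ∈ Ω, u z₂ + (inner ℝ p₂ (y - z₂) : ℝ) - ‖y - z₂‖ * ω ‖y - z₂‖ ≤ u y)
    {ρ T : ℝ} (hρ : 0 < ρ) (hρinf : ρ < infDist z₁ Ωᶜ)
    (hT : ρ + dist z₁ z₂ ≤ T) (hTD : T ∈ Ico (0:ℝ) D)
    (hpq : p₁ ≠ p₂)
    (hs : u z₁ - (u z₂ + (inner ℝ p₂ (z₁ - z₂) : ℝ)) ≤ ‖p₁ - p₂‖ * ((16 / 15) * ρ) / 2) :
    ‖p₁ - p₂‖ * ((16:ℝ)⁻¹ ^ n * ρ / 4)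
      ≤ (C / (2 * n)) * ρ ^ 2 + T * ω T := by
  set w : E := p₁ - p₂ with hwdef
  have hw : w ≠ 0 := sub_ne_zero.2 hpq
  set s : ℝ := u z₁ - (u z₂ + (inner ℝ p₂ (z₁ - z₂) : ℝ)) with hsdef
  set B := ball z₁ ρ with hB
  set V := (volume B).toReal with hV
  have hVpos : 0 < V :=
    ENNReal.toReal_pos (measure_ball_pos volume z₁ hρ).ne' measure_ball_lt_top.ne
  have hsubΩ : B ⊆ Ω :=
    ball_subset_closedBall.trans (closedBall_subset_of_infDist hρinf)
  have hTnn : 0 ≤ T := hTD.1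
  have hωT : 0 ≤ ω T := hnn T hTD
  -- pointwise inequality
  have hpw : ∀ y ∈ B, (u z₂ + (inner ℝ p₂ (y - z₂) : ℝ))
      + max (s + (inner ℝ w (y - z₁) : ℝ)) 0 ≤ u y + T * ω T := by
    intro y hy
    have hyΩ : y ∈ Ω := hsubΩ hy
    have hy1 : ‖y - z₁‖ < ρ := mem_ball_iff_norm.1 hy
    have hy2 : ‖y - z₂‖ < ρ + dist z₁ z₂ := by
      calc ‖y - z₂‖ ≤ ‖y - z₁‖ + ‖z₁ - z₂‖ := norm_sub_le_norm_sub_add_norm_sub y z₁ z₂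
        _ < ρ + dist z₁ z₂ := by rw [← dist_eq_norm z₁ z₂]; linarith
    have hcost : ∀ t : ℝ, 0 ≤ t → t < T ∨ (t ≤ T ∧ True) → t ≤ T → t * ω t ≤ T * ω T := by
      intro t ht _ htT
      have htD : t ∈ Ico (0:ℝ) D := ⟨ht, lt_of_le_of_lt htT hTD.2⟩
      exact mul_le_mul htT (hmono htD hTD htT) (hnn t htD) hTnn
    have hc1 : ‖y - z₁‖ * ω ‖y - z₁‖ ≤ T * ω T := by
      apply hcost _ (norm_nonneg _) (Or.inr ⟨by linarith [dist_nonneg (x := z₁) (y := z₂)], trivial⟩)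
      linarith [dist_nonneg (x := z₁) (y := z₂)]
    have hc2 : ‖y - z₂‖ * ω ‖y - z₂‖ ≤ T * ω T := by
      apply hcost _ (norm_nonneg _) (Or.inr ⟨by linarith, trivial⟩); linarith
    have hb1 : u z₁ + (inner ℝ p₁ (y - z₁) : ℝ) ≤ u y + T * ω T := by
      have := hp₁ y hyΩ; linarith
    have hb2 : u z₂ + (inner ℝ p₂ (y - z₂) : ℝ) ≤ u y + T * ω T := by
      have := hp₂ y hyΩ; linarith
    have hiden : (u z₂ + (inner ℝ p₂ (y - z₂) : ℝ)) + (s + (inner ℝ w (y - z₁) : ℝ))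
        = u z₁ + (inner ℝ p₁ (y - z₁) : ℝ) := by
      rw [hsdef, hwdef, inner_sub_left]
      have : (inner ℝ p₂ (y - z₂) : ℝ) = (inner ℝ p₂ (y - z₁) : ℝ) + (inner ℝ p₂ (z₁ - z₂) : ℝ) := by
        rw [← inner_add_right]; congr 1; abel
      rw [this]; ring
    rcases le_total (s + (inner ℝ w (y - z₁) : ℝ)) 0 with hmax | hmax
    · rw [max_eq_right hmax]; linarith
    · rw [max_eq_left hmax]; linarith
  -- integrability
  have huint : IntegrableOn u B volume :=
    (hloc.integrableOn_compact_subset (closedBall_subset_of_infDist hρinf)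
      (isCompact_closedBall z₁ ρ)).mono_set ball_subset_closedBall
  have hcontQ : Continuous fun y : E => u z₂ + (inner ℝ p₂ (y - z₂) : ℝ) :=
    continuous_const.add (inner_cont p₂ z₂)
  have hcontM : Continuous fun y : E => max (s + (inner ℝ w (y - z₁) : ℝ)) 0 :=
    (continuous_const.add (inner_cont w z₁)).max continuous_const
  -- integrate the pointwise inequality
  have hintineq : ∫ y in B, ((u z₂ + (inner ℝ p₂ (y - z₂) : ℝ))
        + max (s + (inner ℝ w (y - z₁) : ℝ)) 0)
      ≤ ∫ y in B, (u y + T * ω T) := by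
    apply setIntegral_mono_on
      ((cont_integrableOn_ball hcontQ z₁ ρ).add (cont_integrableOn_ball hcontM z₁ ρ))
      (huint.add (const_integrableOn_ball _ _ _))
      measurableSet_ball hpw
  rw [integral_add (cont_integrableOn_ball hcontQ z₁ ρ) (cont_integrableOn_ball hcontM z₁ ρ),
    integral_add huint (const_integrableOn_ball _ _ _)] at hintineq
  have hQ : ∫ y in B, (u z₂ + (inner ℝ p₂ (y - z₂) : ℝ))
      = V * (u z₂ + (inner ℝ p₂ (z₁ - z₂) : ℝ)) := integral_plane_ball _ _ _ _ _
  have hcap : V * (s + (16:ℝ)⁻¹ ^ n * (‖w‖ * ρ / 4))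
      ≤ ∫ y in B, max (s + (inner ℝ w (y - z₁) : ℝ)) 0 := cap_bound hn hw hρ hs z₁
  have hsup : ∫ y in B, u y ≤ V * (u z₁ + (C / (2 * n)) * ρ ^ 2) :=
    superharm_int hC hloc hmv hz₁ hρ hρinf
  have hconst : ∫ _y in B, T * ω T = V * (T * ω T) := by
    rw [setIntegral_const]; simp [smul_eq_mul, hV, measureReal_def]
  rw [hQ, hconst] at hintineq
  -- combine
  have hfinal : V * (u z₂ + (inner ℝ p₂ (z₁ - z₂) : ℝ)) + V * (s + (16:ℝ)⁻¹ ^ n * (‖w‖ * ρ / 4))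
      ≤ V * (u z₁ + (C / (2 * n)) * ρ ^ 2) + V * (T * ω T) := by linarith
  have hdiv : (u z₂ + (inner ℝ p₂ (z₁ - z₂) : ℝ)) + (s + (16:ℝ)⁻¹ ^ n * (‖w‖ * ρ / 4))
      ≤ (u z₁ + (C / (2 * n)) * ρ ^ 2) + T * ω T := by
    nlinarith [hfinal, hVpos]
  have hscancel : u z₂ + (inner ℝ p₂ (z₁ - z₂) : ℝ) + s = u z₁ := by rw [hsdef]; ring
  calc ‖w‖ * ((16:ℝ)⁻¹ ^ n * ρ / 4) = (16:ℝ)⁻¹ ^ n * (‖w‖ * ρ / 4) := by ring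
    _ ≤ (C / (2 * n)) * ρ ^ 2 + T * ω T := by linarith

set_option maxHeartbeats 2000000 in
/-- Lemma F.2: uniqueness, up to a quantitative modulus, of lower
supporting slopes of quasi-superharmonic functions. -/
theorem stmt_16 (n : ℕ) (hn : 1 ≤ n) (C : ℝ) (hC : 0 ≤ C) :
    ∃ C₁ : ℝ, ∀ (Ω : Set (EuclideanSpace ℝ (Fin n))), IsOpen Ω → IsConnected Ω →
      Bornology.IsBounded Ω →
      ∀ u : EuclideanSpace ℝ (Fin n) → ℝ, CanonicalQuasiSuperharmonic n C Ω u →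
      ∀ ω : ℝ → ℝ, ContinuousOn ω (Ico 0 (2 * Metric.diam Ω)) →
        MonotoneOn ω (Ico 0 (2 * Metric.diam Ω)) →
        (∀ t ∈ Ico (0 : ℝ) (2 * Metric.diam Ω), 0 ≤ ω t) →
      ∀ xb ∈ Ω, ∀ yb ∈ Ω, closedBall xb (2 * dist xb yb) ⊆ Ω →
      ∀ p q : EuclideanSpace ℝ (Fin n),
        (∀ y ∈ Ω, u xb + (inner ℝ p (y - xb) : ℝ) - ‖y - xb‖ * ω ‖y - xb‖ ≤ u y) →
        (∀ y ∈ Ω, u yb + (inner ℝ q (y - yb) : ℝ) - ‖y - yb‖ * ω ‖y - yb‖ ≤ u y) →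
        ‖p - q‖ ≤ C₁ * ω (2 * dist xb yb) + C₁ * dist xb yb := by
  refine ⟨(16:ℝ) ^ (n + 2) * (C + 1), ?_⟩
  intro Ω hopen _hconn hbdd u hcqs ω hωcont hωmono hωnn xb hxb yb hyb hball p q hp hq
  obtain ⟨hloc, hmv⟩ := hcqs
  set C₁ : ℝ := (16:ℝ) ^ (n + 2) * (C + 1) with hC₁def
  have hC₁0 : 0 ≤ C₁ := by positivity
  set δ : ℝ := dist xb yb with hδdef
  have hδ0 : 0 ≤ δ := dist_nonneg
  set m : ℝ := ‖p - q‖ with hmdef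
  have hm0 : 0 ≤ m := norm_nonneg _
  set D : ℝ := 2 * diam Ω with hDdef
  have hn' : (1:ℝ) ≤ (n:ℝ) := by exact_mod_cast hn
  -- a unit vector
  set e₀ : EuclideanSpace ℝ (Fin n) := EuclideanSpace.single (⟨0, hn⟩ : Fin n) (1:ℝ) with he₀def
  have hne₀ : ‖e₀‖ = 1 := by rw [he₀def, EuclideanSpace.norm_single]; norm_num
  have hdist_smul : ∀ (z : EuclideanSpace ℝ (Fin n)) (c : ℝ), dist (z + c • e₀) z = |c| := by
    intro z c
    rw [dist_eq_norm, add_sub_cancel_left, norm_smul, hne₀, Real.norm_eq_abs, mul_one]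
  -- Ωᶜ is nonempty
  obtain ⟨R, hR⟩ := hbdd.subset_closedBall xb
  have hcne : Ωᶜ.Nonempty := by
    refine ⟨xb + (max R 0 + 1) • e₀, fun hmem => ?_⟩
    have h1 : dist (xb + (max R 0 + 1) • e₀) xb = max R 0 + 1 := by
      rw [hdist_smul]; exact abs_of_nonneg (by positivity)
    have h2 : max R 0 + 1 ≤ R := by rw [← h1]; exact mem_closedBall.1 (hR hmem)
    have h3 : R ≤ max R 0 := le_max_left _ _
    linarith
  have hinf : ∀ (z : EuclideanSpace ℝ (Fin n)) (r : ℝ), closedBall z r ⊆ Ω → r ≤ infDist z Ωᶜ := by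
    intro z r hsub
    by_contra h
    push_neg at h
    obtain ⟨y, hyc, hylt⟩ := (infDist_lt_iff hcne).1 h
    exact hyc (hsub (mem_closedBall'.2 hylt.le))
  -- diam Ω is positive
  obtain ⟨ε, hε, hballε⟩ := Metric.isOpen_iff.1 hopen xb hxb
  have hdiampos : 0 < diam Ω := by
    have hmem2 : xb + (ε / 2) • e₀ ∈ Ω := by
      apply hballε
      rw [mem_ball, hdist_smul, abs_of_nonneg (by positivity)]
      linarith
    have := dist_le_diam_of_mem hbdd hmem2 hxb
    rw [hdist_smul, abs_of_nonneg (by positivity)] at this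
    linarith
  -- 2δ < D
  have h2δD : 2 * δ < D := by
    rcases eq_or_lt_of_le hδ0 with h0 | h0
    · rw [← h0]; simpa [hDdef] using hdiampos
    · have hmem1 : xb + (2 * δ) • e₀ ∈ Ω := by
        apply hball
        rw [mem_closedBall, hdist_smul, abs_of_nonneg (by positivity)]
      have hmem2 : xb + (-(2 * δ)) • e₀ ∈ Ω := by
        apply hball
        rw [mem_closedBall, hdist_smul, abs_of_nonpos (by linarith)]; linarith
      have hd4 : dist (xb + (2 * δ) • e₀) (xb + (-(2 * δ)) • e₀) = 4 * δ := by
        rw [dist_eq_norm]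
        have h5 : (xb + (2 * δ) • e₀) - (xb + (-(2 * δ)) • e₀) = (4 * δ) • e₀ := by
          module
        rw [h5, norm_smul, hne₀, Real.norm_eq_abs, mul_one, abs_of_nonneg (by linarith)]
      have := dist_le_diam_of_mem hbdd hmem1 hmem2
      rw [hd4] at this
      simp only [hDdef]
      linarith
  have hω2δ : 0 ≤ ω (2 * δ) := hωnn _ ⟨by positivity, h2δD⟩
  have h16pos : (0:ℝ) < 16 ^ n := by positivity
  have hγ16 : (16:ℝ)⁻¹ ^ n * (16:ℝ) ^ n = 1 := by
    rw [← mul_pow]; norm_num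
  have hC₁eq : C₁ = 256 * 16 ^ n * (C + 1) := by
    rw [hC₁def, pow_add]; ring
  have hcn : C / (2 * (n:ℝ)) ≤ C / 2 := by
    rw [div_le_div_iff₀ (by linarith) (by norm_num)]
    nlinarith
  -- trivial case p = q
  by_cases hpq : p = q
  · have hz : m = 0 := by rw [hmdef, hpq, sub_self, norm_zero]
    rw [hz]
    exact add_nonneg (mul_nonneg hC₁0 hω2δ) (mul_nonneg hC₁0 hδ0)
  -- main cases
  by_cases hδeq : δ = 0
  · -- the two points coincide
    have hdist0 : dist xb yb = 0 := by rw [← hδdef]; exact hδeq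
    have hxy : xb = yb := dist_eq_zero.1 hdist0
    set ρ₀ : ℝ := min (ε / 2) (diam Ω) with hρ₀def
    have hρ₀pos : 0 < ρ₀ := lt_min (by linarith) hdiampos
    have hinfxb : ε / 2 ≤ infDist xb Ωᶜ := by
      apply hinf
      intro w hw
      apply hballε
      rw [mem_ball]
      calc dist w xb ≤ ε / 2 := mem_closedBall.1 hw
        _ < ε := by linarith
    have hkey : ∀ ρ, ρ ∈ Ioo (0:ℝ) ρ₀ →
        m ≤ 4 * (16:ℝ) ^ n * ((C / (2 * n)) * ρ + ω ρ) := by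
      intro ρ hρmem
      obtain ⟨hρpos, hρlt⟩ := hρmem
      have hρε : ρ < ε / 2 := lt_of_lt_of_le hρlt (min_le_left _ _)
      have hρdiam : ρ < diam Ω := lt_of_lt_of_le hρlt (min_le_right _ _)
      have h1 : m * ((16:ℝ)⁻¹ ^ n * ρ / 4) ≤ (C / (2 * n)) * ρ ^ 2 + ρ * ω ρ := by
        apply key_budget hn hC hloc hmv hωmono hωnn hxb hp hq hρpos
          (lt_of_lt_of_le hρε hinfxb)
          (by rw [hdist0]; norm_num)
          (⟨hρpos.le, by rw [hDdef]; linarith⟩ : ρ ∈ Ico (0:ℝ) D)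
          hpq
        rw [← hxy, sub_self, inner_zero_right]
        have h0 : u xb - (u xb + 0) = 0 := by ring
        rw [h0]
        exact div_nonneg (mul_nonneg hm0 (by positivity)) (by norm_num)
      have h2eq : m * ρ = (m * ((16:ℝ)⁻¹ ^ n * ρ / 4)) * (4 * 16 ^ n) := by
        linear_combination (-(m * ρ)) * hγ16
      have h2 : m * ρ ≤ 4 * (16:ℝ) ^ n * ((C / (2 * n)) * ρ ^ 2 + ρ * ω ρ) := by
        rw [h2eq]
        calc (m * ((16:ℝ)⁻¹ ^ n * ρ / 4)) * (4 * 16 ^ n)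
            ≤ ((C / (2 * n)) * ρ ^ 2 + ρ * ω ρ) * (4 * 16 ^ n) := by
              apply mul_le_mul_of_nonneg_right h1 (by positivity)
          _ = 4 * (16:ℝ) ^ n * ((C / (2 * n)) * ρ ^ 2 + ρ * ω ρ) := by ring
      have h3 : ρ * m ≤ ρ * (4 * (16:ℝ) ^ n * ((C / (2 * n)) * ρ + ω ρ)) := by
        calc ρ * m = m * ρ := by ring
          _ ≤ 4 * (16:ℝ) ^ n * ((C / (2 * n)) * ρ ^ 2 + ρ * ω ρ) := h2
          _ = ρ * (4 * (16:ℝ) ^ n * ((C / (2 * n)) * ρ + ω ρ)) := by ring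
      exact le_of_mul_le_mul_left h3 hρpos
    -- limit as ρ → 0
    have hD0 : (0:ℝ) ∈ Ico (0:ℝ) D := ⟨le_refl _, by rw [hDdef]; linarith⟩
    have htendω : Tendsto ω (𝓝[Ioo (0:ℝ) ρ₀] 0) (𝓝 (ω 0)) := by
      have h1 : ContinuousWithinAt ω (Ico 0 D) 0 := hωcont.continuousWithinAt hD0
      apply h1.mono_left (nhdsWithin_mono _ ?_)
      intro t ht
      refine ⟨ht.1.le, lt_of_lt_of_le ht.2 ?_⟩
      calc ρ₀ ≤ diam Ω := min_le_right _ _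
        _ ≤ D := by rw [hDdef]; linarith
    have htend : Tendsto (fun ρ => 4 * (16:ℝ) ^ n * ((C / (2 * n)) * ρ + ω ρ))
        (𝓝[Ioo (0:ℝ) ρ₀] 0) (𝓝 (4 * (16:ℝ) ^ n * ((C / (2 * n)) * 0 + ω 0))) := by
      apply Tendsto.const_mul
      exact Tendsto.add
        (((continuous_const.mul continuous_id).continuousAt (x := (0:ℝ))).tendsto.mono_left
          nhdsWithin_le_nhds)
        htendω
    haveI : (𝓝[Ioo (0:ℝ) ρ₀] (0:ℝ)).NeBot := left_nhdsWithin_Ioo_neBot hρ₀pos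
    have hlim : m ≤ 4 * (16:ℝ) ^ n * ((C / (2 * n)) * 0 + ω 0) := by
      apply ge_of_tendsto htend
      filter_upwards [eventually_mem_nhdsWithin] with ρ hρ using hkey ρ hρ
    have hω0 : 0 ≤ ω 0 := hωnn 0 hD0
    have hlim' : m ≤ 4 * (16:ℝ) ^ n * ω 0 := by
      calc m ≤ 4 * (16:ℝ) ^ n * ((C / (2 * n)) * 0 + ω 0) := hlim
        _ = 4 * (16:ℝ) ^ n * ω 0 := by ring
    rw [hδeq]
    have hz2 : (2:ℝ) * 0 = 0 := by norm_num
    rw [hz2]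
    have hgoal : 4 * (16:ℝ) ^ n * ω 0 ≤ C₁ * ω 0 + C₁ * 0 := by
      rw [hC₁eq]
      nlinarith [mul_nonneg h16pos.le hω0, mul_nonneg (mul_nonneg h16pos.le hω0) hC]
    linarith
  · -- distinct points
    have hδpos : 0 < δ := lt_of_le_of_ne hδ0 (Ne.symm hδeq)
    set ρ : ℝ := (15 / 16) * δ with hρdef
    have hρpos : 0 < ρ := by positivity
    have hinfxb : 2 * δ ≤ infDist xb Ωᶜ := hinf _ _ hball
    have hybball : closedBall yb δ ⊆ Ω := by
      intro w hw
      apply hball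
      rw [mem_closedBall]
      calc dist w xb ≤ dist w yb + dist yb xb := dist_triangle _ _ _
        _ = dist w yb + δ := by rw [dist_comm yb xb, ← hδdef]
        _ ≤ δ + δ := by linarith [mem_closedBall.1 hw]
        _ = 2 * δ := by ring
    have hinfyb : δ ≤ infDist yb Ωᶜ := hinf _ _ hybball
    set s₁ : ℝ := u xb - (u yb + (inner ℝ q (xb - yb) : ℝ)) with hs₁def
    set s₂ : ℝ := u yb - (u xb + (inner ℝ p (yb - xb) : ℝ)) with hs₂def
    have hsum : s₁ + s₂ ≤ m * δ := by
      have h1 : s₁ + s₂ = (inner ℝ (p - q) (xb - yb) : ℝ) := by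
        rw [hs₁def, hs₂def, inner_sub_left]
        have h2 : (inner ℝ p (yb - xb) : ℝ) = -(inner ℝ p (xb - yb) : ℝ) := by
          rw [← inner_neg_right]; congr 1; abel
        rw [h2]; ring
      rw [h1]
      calc (inner ℝ (p - q) (xb - yb) : ℝ) ≤ ‖p - q‖ * ‖xb - yb‖ := real_inner_le_norm _ _
        _ = m * δ := by rw [← hmdef, ← dist_eq_norm, ← hδdef]
    have hρ16 : (16 / 15 : ℝ) * ρ = δ := by rw [hρdef]; ring
    -- apply key_budget in the appropriate configuration
    have hkb : m * ((16:ℝ)⁻¹ ^ n * ρ / 4)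
        ≤ (C / (2 * n)) * ρ ^ 2 + 2 * δ * ω (2 * δ) := by
      rcases le_or_gt s₁ (m * δ / 2) with hcase | hcase
      · exact key_budget hn hC hloc hmv hωmono hωnn hxb hp hq hρpos
          (by linarith) (by rw [← hδdef]; linarith)
          ⟨by positivity, h2δD⟩ hpq
          (by rw [hρ16, ← hs₁def]; linarith)
      · have hcase2 : s₂ ≤ m * δ / 2 := by linarith
        have hqp : q ≠ p := Ne.symm hpq
        have hkb2 := key_budget hn hC hloc hmv hωmono hωnn hyb hq hp hρpos
          (by linarith) (by rw [dist_comm yb xb, ← hδdef]; linarith)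
          (⟨by positivity, h2δD⟩ : 2 * δ ∈ Ico (0:ℝ) D) hqp
          (by rw [hρ16, norm_sub_rev, ← hmdef, ← hs₂def]; linarith)
        rwa [norm_sub_rev, ← hmdef] at hkb2
    -- final arithmetic
    have h2eq : m * ρ = (m * ((16:ℝ)⁻¹ ^ n * ρ / 4)) * (4 * 16 ^ n) := by
      linear_combination (-(m * ρ)) * hγ16
    have h2 : m * ρ ≤ 4 * (16:ℝ) ^ n * ((C / (2 * n)) * ρ ^ 2 + 2 * δ * ω (2 * δ)) := by
      rw [h2eq]
      calc (m * ((16:ℝ)⁻¹ ^ n * ρ / 4)) * (4 * 16 ^ n)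
          ≤ ((C / (2 * n)) * ρ ^ 2 + 2 * δ * ω (2 * δ)) * (4 * 16 ^ n) :=
            mul_le_mul_of_nonneg_right hkb (by positivity)
        _ = 4 * (16:ℝ) ^ n * ((C / (2 * n)) * ρ ^ 2 + 2 * δ * ω (2 * δ)) := by ring
    have hcδ : (C / (2 * (n:ℝ))) * ρ ^ 2 ≤ (C / 2) * ρ ^ 2 :=
      mul_le_mul_of_nonneg_right hcn (sq_nonneg ρ)
    have h6 : m * ρ ≤ 4 * (16:ℝ) ^ n * ((C / 2) * ρ ^ 2 + 2 * δ * ω (2 * δ)) := by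
      refine h2.trans ?_
      have h16nn : (0:ℝ) ≤ 4 * (16:ℝ) ^ n := by positivity
      nlinarith [mul_le_mul_of_nonneg_left hcδ h16nn]
    rw [hρdef] at h6
    have h7 : m * (15 / 16)
        ≤ 4 * (16:ℝ) ^ n * ((C / 2) * (225 / 256) * δ + 2 * ω (2 * δ)) := by
      apply le_of_mul_le_mul_right _ hδpos
      calc m * (15 / 16) * δ = m * ((15 / 16) * δ) := by ring
        _ ≤ 4 * (16:ℝ) ^ n * ((C / 2) * ((15 / 16) * δ) ^ 2 + 2 * δ * ω (2 * δ)) := h6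
        _ = 4 * (16:ℝ) ^ n * ((C / 2) * (225 / 256) * δ + 2 * ω (2 * δ)) * δ := by ring
    rw [hC₁eq]
    nlinarith [h7, mul_nonneg h16pos.le hω2δ, mul_nonneg (mul_nonneg h16pos.le hω2δ) hC,
      mul_nonneg (mul_nonneg h16pos.le hδ0) hC, mul_nonneg h16pos.le hδ0]
end
end

section
/- Let n ≥ 1, let Ω ⊂ ℝⁿ be a bounded domain with diameter d, let C ≥ 0 be a constant, and let u : Ω → ℝ be canonical quasi-superharmonic with constant C. Let ω : [0, 2d) → [0, ∞) be a continuous nondecreasing function. Suppose x̄, ȳ ∈ Ω with x̄ ≠ ȳ and the closed ball of radius 2|x̄ − ȳ| centered at x̄ contained in Ω, and p, q ∈ ℝⁿ satisfy: u(y) ≥ u(x̄) + p·(y − x̄) − |y − x̄| ω(|y − x̄|) for all y ∈ Ω, and u(z) ≥ u(x̄) + p·(ȳ − x̄) − |ȳ − x̄| ω(|ȳ − x̄|) + q·(z − ȳ) − |z − ȳ| ω(|z − ȳ|) for all z ∈ Ω. Then there exist positive constants C₁ and C₂ depending only on n such that |p − q| ≤ C₁ ω(2|x̄ − ȳ|)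 + C₂ C |x̄ − ȳ|. -/
open Filter Metric Set MeasureTheory Topology

attribute [local instance] Matrix.normedAddCommGroup Matrix.normedSpace

noncomputable section

lemma integral_inner_ball_zero {n : ℕ} (v x : EuclideanSpace ℝ (Fin n)) (r : ℝ) :
    ∫ y in ball x r, (inner ℝ v (y - x) : ℝ) = 0 := by
  set T : EuclideanSpace ℝ (Fin n) → EuclideanSpace ℝ (Fin n) := fun t => (x + x) - t with hT
  have hmp : MeasurePreserving T volume volume :=
    Measure.measurePreserving_sub_left volume (x + x)
  have hemb : MeasurableEmbedding T := (MeasurableEquiv.subLeft (x + x)).measurableEmbedding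
  have hpre : T ⁻¹' (ball x r) = ball x r := by
    ext t
    simp only [mem_preimage, mem_ball, hT, dist_eq_norm]
    constructor <;> intro h <;>
      · have h2 : x + x - t - x = -(t - x) := by abel
        first
          | (rw [h2, norm_neg] at h; exact h)
          | (rw [h2, norm_neg]; exact h)
  have key := hmp.setIntegral_preimage_emb hemb
    (fun y => (inner ℝ v (y - x) : ℝ)) (ball x r)
  rw [hpre] at key
  have hneg : ∀ t : EuclideanSpace ℝ (Fin n),
      (inner ℝ v (T t - x) : ℝ) = -(inner ℝ v (t - x) : ℝ) := by
    intro t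
    have h2 : T t - x = -(t - x) := by simp only [hT]; abel
    rw [h2, inner_neg_right]
  simp_rw [hneg] at key
  rw [integral_neg] at key
  linarith

lemma arith_aux {s d ω2 K c C : ℝ} (hK : 0 < K) (hC : 0 ≤ C)
    (hdiv : s * d / 4 ≤ 4 * d * ω2 * K + c * K * (225 / 64 * d ^ 2))
    (hcle : c ≤ C / 2) :
    s * d ≤ (16 * K * ω2 + 8 * K * C * d) * d := by
  have hp1 : 0 ≤ (C / 2 - c) * K * d ^ 2 :=
    mul_nonneg (mul_nonneg (sub_nonneg.2 hcle) hK.le) (sq_nonneg d)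
  have hp2 : 0 ≤ C * K * d ^ 2 :=
    mul_nonneg (mul_nonneg hC hK.le) (sq_nonneg d)
  nlinarith [hdiv, hp1, hp2]

set_option maxHeartbeats 1000000 in
/-- Lemma F.3: variant of Lemma F.2 where the second supporting
inequality is anchored at the value predicted by the first. -/
theorem stmt_17 (n : ℕ) (hn : 1 ≤ n) :
    ∃ C₁ : ℝ, 0 < C₁ ∧ ∃ C₂ : ℝ, 0 < C₂ ∧
    ∀ C : ℝ, 0 ≤ C →
    ∀ (Ω : Set (EuclideanSpace ℝ (Fin n))), IsOpen Ω → IsConnected Ω →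
      Bornology.IsBounded Ω →
      ∀ u : EuclideanSpace ℝ (Fin n) → ℝ, CanonicalQuasiSuperharmonic n C Ω u →
      ∀ ω : ℝ → ℝ, ContinuousOn ω (Ico 0 (2 * Metric.diam Ω)) →
        MonotoneOn ω (Ico 0 (2 * Metric.diam Ω)) →
        (∀ t ∈ Ico (0 : ℝ) (2 * Metric.diam Ω), 0 ≤ ω t) →
      ∀ xb ∈ Ω, ∀ yb ∈ Ω, xb ≠ yb → closedBall xb (2 * dist xb yb) ⊆ Ω →
      ∀ p q : EuclideanSpace ℝ (Fin n),
        (∀ y ∈ Ω, u xb + (inner ℝ p (y - xb) : ℝ) - ‖y - xb‖ * ω ‖y - xb‖ ≤ u y) →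
        (∀ z ∈ Ω, u xb + (inner ℝ p (yb - xb) : ℝ) - ‖yb - xb‖ * ω ‖yb - xb‖ +
            (inner ℝ q (z - yb) : ℝ) - ‖z - yb‖ * ω ‖z - yb‖ ≤ u z) →
        ‖p - q‖ ≤ C₁ * ω (2 * dist xb yb) + C₂ * C * dist xb yb := by
  have hn' : (1 : ℝ) ≤ (n : ℝ) := by exact_mod_cast hn
  set K : ℝ := (15 / 2 : ℝ) ^ n with hKdef
  have hKpos : 0 < K := pow_pos (by norm_num) n
  refine ⟨16 * K, by positivity, 8 * K, by positivity, ?_⟩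
  intro C hC Ω hΩopen _hconn hΩbdd u hQ ω hωcont hωmono hωnonneg xb hxb yb hyb hne hballsub p q h1 h2
  obtain ⟨hloc, hsmv⟩ := hQ
  haveI : Nontrivial (EuclideanSpace ℝ (Fin n)) := by
    refine ⟨EuclideanSpace.single ⟨0, hn⟩ 1, 0, fun h => ?_⟩
    have := congrArg (fun v : EuclideanSpace ℝ (Fin n) => v ⟨0, hn⟩) h
    simp [EuclideanSpace.single] at this
  set d : ℝ := dist xb yb with hddef
  have hd : 0 < d := dist_pos.2 hne
  have hyx : ‖yb - xb‖ = d := by rw [hddef, dist_eq_norm, norm_sub_rev]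
  -- diameter lower bound
  have hdiam : 4 * d ≤ Metric.diam Ω := by
    set e' : EuclideanSpace ℝ (Fin n) := ‖yb - xb‖⁻¹ • (yb - xb) with he'def
    have hyx0 : ‖yb - xb‖ ≠ 0 := by rw [hyx]; exact hd.ne'
    have he' : ‖e'‖ = 1 := by
      rw [he'def, norm_smul, norm_inv, norm_norm, inv_mul_cancel₀ hyx0]
    have hmem : ∀ t : ℝ, |t| ≤ 2 * d → xb + t • e' ∈ Metric.closedBall xb (2 * d) := by
      intro t ht
      simp only [mem_closedBall, dist_eq_norm, add_sub_cancel_left, norm_smul, he',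
        mul_one, Real.norm_eq_abs]
      exact ht
    have ha := hmem (2 * d) (by rw [abs_of_nonneg (by linarith)])
    have hb := hmem (-(2 * d)) (by rw [abs_neg, abs_of_nonneg (by linarith)])
    have hdist : dist (xb + (2 * d) • e') (xb + (-(2 * d)) • e') = 4 * d := by
      rw [dist_eq_norm]
      have heq : (xb + (2 * d) • e') - (xb + (-(2 * d)) • e') = (4 * d) • e' := by
        rw [show (4 * d : ℝ) = 2 * d - -(2 * d) by ring, sub_smul]
        abel
      rw [heq, norm_smul, he', mul_one, Real.norm_eq_abs, abs_of_nonneg (by linarith)]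
    calc 4 * d = dist (xb + (2 * d) • e') (xb + (-(2 * d)) • e') := hdist.symm
      _ ≤ Metric.diam Ω := Metric.dist_le_diam_of_mem hΩbdd (hballsub ha) (hballsub hb)
  have hmemI : ∀ t : ℝ, 0 ≤ t → t ≤ 2 * d → t ∈ Ico (0 : ℝ) (2 * Metric.diam Ω) :=
    fun t ht ht' => ⟨ht, by linarith⟩
  set ω2 : ℝ := ω (2 * d) with hω2def
  have hω2 : 0 ≤ ω2 := hωnonneg _ (hmemI _ (by linarith) le_rfl)
  have hωle : ∀ t : ℝ, 0 ≤ t → t ≤ 2 * d → ω t ≤ ω2 := fun t ht ht' =>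
    hωmono (hmemI t ht ht') (hmemI _ (by linarith) le_rfl) ht'
  have hdω2 : 0 ≤ d * ω2 := mul_nonneg hd.le hω2
  rcases eq_or_ne p q with rfl | hpq
  · rw [sub_self, norm_zero]
    exact add_nonneg (mul_nonneg (by positivity) hω2)
      (mul_nonneg (mul_nonneg (by positivity) hC) hd.le)
  set s : ℝ := ‖q - p‖ with hsdef
  have hs : 0 < s := by rw [hsdef]; exact norm_pos_iff.2 (sub_ne_zero.2 (Ne.symm hpq))
  set e : EuclideanSpace ℝ (Fin n) := s⁻¹ • (q - p) with hedef
  have he : ‖e‖ = 1 := by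
    rw [hedef, norm_smul, norm_inv, Real.norm_eq_abs, abs_of_pos hs, ← hsdef,
      inv_mul_cancel₀ hs.ne']
  set cA : EuclideanSpace ℝ (Fin n) := yb + (d / 2) • e with hcAdef
  set A : Set (EuclideanSpace ℝ (Fin n)) := ball cA (d / 4) with hAdef
  set r : ℝ := 15 / 8 * d with hrdef
  have hr0 : 0 < r := by rw [hrdef]; linarith
  set B : Set (EuclideanSpace ℝ (Fin n)) := ball xb r with hBdef
  have hsub2d : Metric.closedBall xb r ⊆ Ω := fun z hz =>
    hballsub (closedBall_subset_closedBall (by rw [hrdef]; linarith) hz)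
  have hBΩ : B ⊆ Ω := ball_subset_closedBall.trans hsub2d
  have hcAyb : dist cA yb = d / 2 := by
    rw [hcAdef, dist_eq_norm, add_sub_cancel_left, norm_smul, he, mul_one, Real.norm_eq_abs,
      abs_of_nonneg (by linarith)]
  have hAB : A ⊆ B := by
    intro z hz
    rw [hAdef, mem_ball] at hz
    rw [hBdef, mem_ball]
    calc dist z xb ≤ dist z cA + dist cA yb + dist yb xb := dist_triangle4 z cA yb xb
      _ < d / 4 + d / 2 + d := by
          rw [hcAyb]
          have : dist yb xb = d := by rw [hddef, dist_comm]
          linarith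
      _ < r := by rw [hrdef]; linarith
  have hAΩ : A ⊆ Ω := hAB.trans hBΩ
  -- infDist bound
  have hcomp : Ωᶜ.Nonempty := by
    obtain ⟨R, hR⟩ := hΩbdd.subset_ball (0 : EuclideanSpace ℝ (Fin n))
    obtain ⟨z, hz⟩ := NormedSpace.exists_lt_norm ℝ (EuclideanSpace ℝ (Fin n)) R
    refine ⟨z, fun hzΩ => ?_⟩
    have := hR hzΩ
    rw [mem_ball, dist_zero_right] at this
    linarith
  have hinf2d : 2 * d ≤ Metric.infDist xb Ωᶜ := by
    by_contra hlt
    push_neg at hlt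
    obtain ⟨y, hyc, hylt⟩ := (Metric.infDist_lt_iff hcomp).1 hlt
    exact hyc (hballsub (mem_closedBall.2 (by rw [dist_comm]; exact hylt.le)))
  have hinf : r < Metric.infDist xb Ωᶜ := lt_of_lt_of_le (by rw [hrdef]; linarith) hinf2d
  -- integrability on B
  have hBmeas : MeasurableSet B := measurableSet_ball
  have hμB : volume B ≠ ⊤ := measure_ball_lt_top.ne
  have hiu : IntegrableOn u B :=
    (hloc.integrableOn_compact_subset hsub2d (isCompact_closedBall xb r)).mono_set
      ball_subset_closedBall
  have hiCont : ∀ f : EuclideanSpace ℝ (Fin n) → ℝ, Continuous f → IntegrableOn f B :=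
    fun f hf => (hf.continuousOn.integrableOn_compact (isCompact_closedBall xb r)).mono_set
      ball_subset_closedBall
  have hiconst : ∀ k : ℝ, IntegrableOn (fun _ => k) B :=
    fun k => integrableOn_const measure_ball_lt_top.ne
  set c : ℝ := C / (2 * (n : ℝ)) with hcdef
  have hc0 : 0 ≤ c := div_nonneg hC (by positivity)
  set V : ℝ := (volume B).toReal with hVdef
  have hVpos : 0 < V := ENNReal.toReal_pos (measure_ball_pos volume xb hr0).ne' hμB
  -- Step 1 : ∫_B u ≤ V u(xb) + c V r²
  have hmean := hsmv xb hxb r hr0 hinf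
  rw [setAverage_eq, smul_eq_mul] at hmean
  have hnormsq : Continuous fun y : EuclideanSpace ℝ (Fin n) => ‖y‖ ^ 2 :=
    (continuous_norm.pow 2)
  have hcn : Continuous fun y : EuclideanSpace ℝ (Fin n) => c * ‖y‖ ^ 2 :=
    continuous_const.mul hnormsq
  have h1' : ∫ y in B, (u y - c * ‖y‖ ^ 2) ≤ V * (u xb - c * ‖xb‖ ^ 2) := by
    have h := mul_le_mul_of_nonneg_left hmean hVpos.le
    rwa [show volume.real (ball xb r) = V from rfl, ← mul_assoc, mul_inv_cancel₀ hVpos.ne', one_mul] at h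
  have hsplit : ∫ y in B, (u y - c * ‖y‖ ^ 2) =
      (∫ y in B, u y) - c * ∫ y in B, ‖y‖ ^ 2 := by
    rw [integral_sub hiu (hiCont _ hcn), integral_const_mul]
  have hexp : ∫ y in B, ‖y‖ ^ 2 = V * ‖xb‖ ^ 2 + ∫ y in B, ‖y - xb‖ ^ 2 := by
    have hptw : ∀ y : EuclideanSpace ℝ (Fin n),
        ‖y‖ ^ 2 = ‖xb‖ ^ 2 + (2 * (inner ℝ xb (y - xb) : ℝ) + ‖y - xb‖ ^ 2) := by
      intro y
      have h := norm_add_sq_real xb (y - xb)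
      rw [add_sub_cancel] at h
      linarith
    have hicn : IntegrableOn (fun y : EuclideanSpace ℝ (Fin n) =>
        2 * (inner ℝ xb (y - xb) : ℝ) + ‖y - xb‖ ^ 2) B := by
      apply Integrable.add
      · exact (hiCont _ (continuous_const.mul
          (continuous_const.inner (continuous_id.sub continuous_const))))
      · exact hiCont _ ((continuous_id.sub continuous_const).norm.pow 2)
    calc ∫ y in B, ‖y‖ ^ 2
        = ∫ y in B, (‖xb‖ ^ 2 + (2 * (inner ℝ xb (y - xb) : ℝ) + ‖y - xb‖ ^ 2)) := by
          exact integral_congr_ae (Eventually.of_forall fun y => hptw y)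
      _ = V * ‖xb‖ ^ 2 + ∫ y in B, (2 * (inner ℝ xb (y - xb) : ℝ) + ‖y - xb‖ ^ 2) := by
          rw [integral_add (hiconst _) hicn, setIntegral_const, smul_eq_mul, measureReal_def]
      _ = V * ‖xb‖ ^ 2 + ∫ y in B, ‖y - xb‖ ^ 2 := by
          have hlin : IntegrableOn (fun y : EuclideanSpace ℝ (Fin n) =>
              2 * (inner ℝ xb (y - xb) : ℝ)) B := hiCont _ (continuous_const.mul
                (Continuous.inner continuous_const (continuous_id.sub continuous_const)))
          have hsq : IntegrableOn (fun y : EuclideanSpace ℝ (Fin n) =>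
              ‖y - xb‖ ^ 2) B := hiCont _ ((continuous_id.sub continuous_const).norm.pow 2)
          rw [integral_add hlin hsq, integral_const_mul, integral_inner_ball_zero]
          ring
  have hbound : ∫ y in B, ‖y - xb‖ ^ 2 ≤ V * r ^ 2 := by
    have h := setIntegral_mono_on (hiCont _ ((continuous_id.sub continuous_const).norm.pow 2))
      (hiconst (r ^ 2)) hBmeas (fun y hy => by
        have : ‖y - xb‖ < r := by rw [← dist_eq_norm]; exact mem_ball.1 hy
        exact pow_le_pow_left₀ (norm_nonneg _) this.le 2)
    rwa [setIntegral_const, smul_eq_mul, measureReal_def] at h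
  have hstep1 : ∫ y in B, u y ≤ V * u xb + c * (V * r ^ 2) := by
    have hA1 : ∫ y in B, ‖y‖ ^ 2 ≤ V * ‖xb‖ ^ 2 + V * r ^ 2 := by rw [hexp]; linarith
    have hB2 : c * ∫ y in B, ‖y‖ ^ 2 ≤ c * (V * ‖xb‖ ^ 2) + c * (V * r ^ 2) := by
      have := mul_le_mul_of_nonneg_left hA1 hc0
      linarith [this, mul_add c (V * ‖xb‖ ^ 2) (V * r ^ 2)]
    have h1'' : (∫ y in B, u y) - c * ∫ y in B, ‖y‖ ^ 2 ≤
        V * u xb - V * (c * ‖xb‖ ^ 2) := by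
      rw [← hsplit]; rw [mul_sub] at h1'; exact h1'
    have hcomm : V * (c * ‖xb‖ ^ 2) = c * (V * ‖xb‖ ^ 2) := by ring
    linarith
  -- Step 2 : pointwise lower bound and its integral
  set g : EuclideanSpace ℝ (Fin n) → ℝ :=
    fun z => -(4 * d * ω2) + A.indicator (fun _ => s * d / 4) z with hgdef
  have hig : IntegrableOn g B := by
    apply Integrable.add
    · exact hiconst _
    · exact (hiconst (s * d / 4)).indicator measurableSet_ball
  have hiw : IntegrableOn (fun z => u z - u xb - (inner ℝ p (z - xb) : ℝ)) B :=
    (hiu.sub (hiconst (u xb))).sub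
      (hiCont _ (continuous_const.inner (continuous_id.sub continuous_const)))
  have hptw2 : ∀ z ∈ B, g z ≤ u z - u xb - (inner ℝ p (z - xb) : ℝ) := by
    intro z hzB
    by_cases hzA : z ∈ A
    · have hz2 := h2 z (hAΩ hzA)
      have hid : (inner ℝ p (yb - xb) : ℝ) + (inner ℝ q (z - yb) : ℝ) - (inner ℝ p (z - xb) : ℝ)
          = (inner ℝ (q - p) (z - yb) : ℝ) := by
        simp only [inner_sub_left, inner_sub_right]
        ring
      have hzcA : ‖z - cA‖ ≤ d / 4 := by
        have h := mem_ball.1 hzA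
        rw [dist_eq_norm] at h
        exact h.le
      have hzyb : z - yb = (z - cA) + (d / 2) • e := by
        rw [hcAdef]; abel
      have hinner1 : (inner ℝ (q - p) ((d / 2) • e) : ℝ) = d / 2 * s := by
        rw [real_inner_smul_right, hedef, real_inner_smul_right,
          real_inner_self_eq_norm_sq, ← hsdef]
        field_simp
      have hinner2 : -(s * (d / 4)) ≤ (inner ℝ (q - p) (z - cA) : ℝ) := by
        have habs := abs_real_inner_le_norm (q - p) (z - cA)
        have hnab := neg_abs_le (inner ℝ (q - p) (z - cA) : ℝ)
        have hmul : ‖q - p‖ * ‖z - cA‖ ≤ s * (d / 4) := by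
          rw [← hsdef]
          exact mul_le_mul_of_nonneg_left hzcA hs.le
        linarith
      have hq4 : s * d / 4 ≤ (inner ℝ (q - p) (z - yb) : ℝ) := by
        rw [hzyb, inner_add_right, hinner1]
        linarith
      have hzybn : ‖z - yb‖ ≤ 3 * d / 4 := by
        calc ‖z - yb‖ = ‖(z - cA) + (d / 2) • e‖ := by rw [← hzyb]
          _ ≤ ‖z - cA‖ + ‖(d / 2) • e‖ := norm_add_le _ _
          _ ≤ d / 4 + d / 2 := by
              rw [norm_smul, he, mul_one, Real.norm_eq_abs, abs_of_nonneg (by linarith : (0:ℝ) ≤ d / 2)]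
              linarith
          _ = 3 * d / 4 := by ring
      have ht1 : ‖z - yb‖ * ω ‖z - yb‖ ≤ 3 * d / 4 * ω2 := by
        have h0 : (0 : ℝ) ≤ ‖z - yb‖ := norm_nonneg _
        have hωz : ω ‖z - yb‖ ≤ ω2 := hωle _ h0 (by linarith)
        have hωz0 : 0 ≤ ω ‖z - yb‖ := hωnonneg _ (hmemI _ h0 (by linarith))
        nlinarith
      have ht2 : ‖yb - xb‖ * ω ‖yb - xb‖ ≤ d * ω2 := by
        rw [hyx]
        have := hωle d hd.le (by linarith)
        nlinarith
      have hgz : g z = -(4 * d * ω2) + s * d / 4 := by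
        rw [hgdef]
        simp only [Set.indicator_of_mem hzA]
      rw [hgz]
      linarith
    · have hz1 := h1 z (hBΩ hzB)
      have hzxb : ‖z - xb‖ ≤ 2 * d := by
        have h := mem_ball.1 hzB
        rw [dist_eq_norm] at h
        rw [hrdef] at h
        linarith
      have ht3 : ‖z - xb‖ * ω ‖z - xb‖ ≤ 2 * d * ω2 := by
        have h0 : (0 : ℝ) ≤ ‖z - xb‖ := norm_nonneg _
        have hωz : ω ‖z - xb‖ ≤ ω2 := hωle _ h0 hzxb
        have hωz0 : 0 ≤ ω ‖z - xb‖ := hωnonneg _ (hmemI _ h0 hzxb)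
        nlinarith
      have hgz : g z = -(4 * d * ω2) := by
        rw [hgdef]
        simp only [Set.indicator_of_notMem hzA, add_zero]
      rw [hgz]
      linarith
  have hmono := setIntegral_mono_on hig hiw hBmeas hptw2
  set VA : ℝ := (volume A).toReal with hVAdef
  have hgint : ∫ z in B, g z = V * (-(4 * d * ω2)) + VA * (s * d / 4) := by
    rw [hgdef]
    rw [integral_add (hiconst _) ((hiconst (s * d / 4)).indicator measurableSet_ball),
      setIntegral_const, setIntegral_indicator measurableSet_ball,
      inter_eq_self_of_subset_right hAB, setIntegral_const]
    simp [smul_eq_mul, measureReal_def, hVdef, hVAdef]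
  have hwint : ∫ z in B, (u z - u xb - (inner ℝ p (z - xb) : ℝ))
      = (∫ z in B, u z) - V * u xb := by
    have hlin2 : IntegrableOn (fun z : EuclideanSpace ℝ (Fin n) =>
        (inner ℝ p (z - xb) : ℝ)) B := hiCont _
          (Continuous.inner continuous_const (continuous_id.sub continuous_const))
    have hfirst : IntegrableOn (fun z : EuclideanSpace ℝ (Fin n) => u z - u xb) B :=
      hiu.sub (hiconst (u xb))
    rw [integral_sub hfirst hlin2, integral_sub hiu (hiconst (u xb)), setIntegral_const,
      integral_inner_ball_zero]
    simp [smul_eq_mul, measureReal_def, hVdef]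
  -- volume ratio
  set κ : ℝ := (volume (ball (0 : EuclideanSpace ℝ (Fin n)) 1)).toReal with hκdef
  have hκpos : 0 < κ :=
    ENNReal.toReal_pos (measure_ball_pos volume 0 one_pos).ne' measure_ball_lt_top.ne
  have hVeq : V = r ^ n * κ := by
    rw [hVdef, hBdef, Measure.addHaar_ball volume xb hr0.le, ENNReal.toReal_mul,
      ENNReal.toReal_ofReal (pow_nonneg hr0.le _), finrank_euclideanSpace_fin, hκdef]
  have hVAeq : VA = (d / 4) ^ n * κ := by
    rw [hVAdef, hAdef, Measure.addHaar_ball volume cA (by linarith : (0:ℝ) ≤ d / 4),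
      ENNReal.toReal_mul, ENNReal.toReal_ofReal (pow_nonneg (by linarith) _),
      finrank_euclideanSpace_fin, hκdef]
  have hVApos : 0 < VA := by
    rw [hVAeq]
    positivity
  have hVK : V = K * VA := by
    rw [hVeq, hVAeq, hKdef, show r = 15 / 2 * (d / 4) by rw [hrdef]; ring, mul_pow]
    ring
  -- combine
  have hkey : VA * (s * d / 4) ≤ V * (4 * d * ω2) + c * (V * r ^ 2) := by
    rw [hgint] at hmono
    rw [hwint] at hmono
    linarith
  have hkey2 : VA * (s * d / 4) ≤ VA * (4 * d * ω2 * K + c * K * r ^ 2) := by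
    have hring : V * (4 * d * ω2) + c * (V * r ^ 2)
        = VA * (4 * d * ω2 * K + c * K * r ^ 2) := by
      rw [hVK]; ring
    linarith
  have hdiv : s * d / 4 ≤ 4 * d * ω2 * K + c * K * r ^ 2 :=
    le_of_mul_le_mul_left hkey2 hVApos
  have hcle : c ≤ C / 2 := by
    rw [hcdef]
    apply div_le_div_of_nonneg_left hC (by norm_num) (by linarith)
  have hrr : r ^ 2 = 225 / 64 * d ^ 2 := by rw [hrdef]; ring
  rw [hrr] at hdiv
  have h4 : s * d ≤ (16 * K * ω2 + 8 * K * C * d) * d :=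
    arith_aux hKpos hC hdiv hcle
  have hfin : s ≤ 16 * K * ω2 + 8 * K * C * d := le_of_mul_le_mul_right h4 hd
  calc ‖p - q‖ = s := by rw [hsdef, norm_sub_rev]
    _ ≤ 16 * K * ω2 + 8 * K * C * d := hfin
end
end

section
/- Let n ≥ 1, let u : B₁ ∖ {0} → ℝ satisfy condition (★) with some radius r̄ ∈ (0, 1], and let v ∈ C²(B̄₁) (in particular sup_{B₁} ‖∇²v‖ < ∞). Assume liminf_{x → 0} (u − v)(x) = 0. Then for every ε > 0 there exists 0 < r̄_ε < r̄ such that inf_{x ∈ ∂B_r} (u(x) − v(x) − ε|x|) < 0 for all 0 < r < r̄_ε. -/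
open Filter Metric Set MeasureTheory Topology

attribute [local instance] Matrix.normedAddCommGroup Matrix.normedSpace

noncomputable section

/-- Lemma 2.1: if `liminf_{x→0}(u - v) = 0` and `u` satisfies condition
(★), then for every `ε > 0` the infimum of `u - v - ε|x|` over small spheres is negative. -/
theorem stmt_18 (n : ℕ) (hn : 1 ≤ n) (u v : EuclideanSpace ℝ (Fin n) → ℝ)
    (rbar : ℝ) (hrbar0 : 0 < rbar) (hrbar1 : rbar ≤ 1) (hstar : StarCond n u rbar)
    (hv : ContDiffOn ℝ 2 v (closedBall (0 : EuclideanSpace ℝ (Fin n)) 1))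
    (hlim1 : ∀ ε : ℝ, 0 < ε →
      ∀ᶠ x in 𝓝[≠] (0 : EuclideanSpace ℝ (Fin n)), -ε < u x - v x)
    (hlim2 : ∀ ε : ℝ, 0 < ε →
      ∃ᶠ x in 𝓝[≠] (0 : EuclideanSpace ℝ (Fin n)), u x - v x < ε) :
    ∀ ε : ℝ, 0 < ε → ∃ rε : ℝ, 0 < rε ∧ rε < rbar ∧
      ∀ r : ℝ, 0 < r → r < rε →
        ∃ x ∈ sphere (0 : EuclideanSpace ℝ (Fin n)) r, u x - v x - ε * ‖x‖ < 0 := by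
  intro ε hε
  haveI : Nonempty (Fin n) := ⟨⟨0, hn⟩⟩
  haveI : Nontrivial (EuclideanSpace ℝ (Fin n)) := inferInstance
  have hd : DifferentiableAt ℝ v 0 :=
    (hv.differentiableOn two_ne_zero).differentiableAt
      (closedBall_mem_nhds (0 : EuclideanSpace ℝ (Fin n)) one_pos)
  set f' := fderiv ℝ v (0 : EuclideanSpace ℝ (Fin n)) with hf'
  have hlo : ∀ᶠ x in 𝓝 (0 : EuclideanSpace ℝ (Fin n)),
      ‖v x - v 0 - f' x‖ ≤ ε/4 * ‖x‖ := by
    have := (hd.hasFDerivAt.isLittleO).def (by positivity : (0:ℝ) < ε/4)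
    simpa using this
  obtain ⟨δ, hδ0, hδ⟩ := Metric.eventually_nhds_iff.mp hlo
  set W : EuclideanSpace ℝ (Fin n) := -((InnerProductSpace.toDual ℝ _).symm f') with hWdef
  have hW : ∀ x, (inner ℝ W x : ℝ) = - f' x := by
    intro x
    simp [hWdef, inner_neg_left, InnerProductSpace.toDual_symm_apply]
  refine ⟨min δ rbar / 2, by positivity, ?_, ?_⟩
  · calc min δ rbar / 2 ≤ rbar / 2 := by
          have := min_le_right δ rbar; linarith
      _ < rbar := by linarith
  intro r hr0 hrε
  have hrδ : r < δ := by
    have := min_le_left δ rbar; linarith [hrε]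
  have hrb : r < rbar := by
    have := min_le_right δ rbar; linarith [hrε]
  set w : EuclideanSpace ℝ (Fin n) → ℝ := fun x => u x + (inner ℝ W x : ℝ) with hwdef
  have hIs := hstar W r hr0 hrb
  -- Step 0: boundedness below
  have hbdd : BddBelow (w '' (ball (0 : EuclideanSpace ℝ (Fin n)) r \ {0})) := by
    by_contra hnb
    obtain ⟨y₀, hy₀⟩ := NormedSpace.sphere_nonempty (x := (0:EuclideanSpace ℝ (Fin n))).mpr hr0.le
    have hy₀n : ‖y₀‖ = r := mem_sphere_zero_iff_norm.mp hy₀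
    set c : ℝ := -(u y₀ + (inner ℝ W y₀ : ℝ) + 1)/r^2 with hc
    set W' : EuclideanSpace ℝ (Fin n) := W + c • y₀ with hW'
    have hinner : ∀ x, (inner ℝ W' x : ℝ) = (inner ℝ W x : ℝ) + c * (inner ℝ y₀ x : ℝ) := by
      intro x; simp [hW', inner_add_left, real_inner_smul_left, Finset.mul_sum, mul_assoc]
    have hW'y : u y₀ + (inner ℝ W' y₀ : ℝ) = -1 := by
      rw [hinner, real_inner_self_eq_norm_sq, hy₀n]
      rw [hc, div_mul_cancel₀ _ (by positivity)]
      ring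
    have hnb' : ¬ BddBelow ((fun x => u x + (inner ℝ W' x : ℝ)) ''
        (ball (0 : EuclideanSpace ℝ (Fin n)) r \ {0})) := by
      rintro ⟨b, hb⟩
      apply hnb
      refine ⟨b - |c| * (r * r), ?_⟩
      rintro _ ⟨x, hx, rfl⟩
      have h1 : b ≤ u x + (inner ℝ W' x : ℝ) := hb ⟨x, hx, rfl⟩
      have h2 : |(inner ℝ y₀ x : ℝ)| ≤ r * r := by
        calc |(inner ℝ y₀ x : ℝ)| ≤ ‖y₀‖ * ‖x‖ := abs_real_inner_le_norm _ _
          _ ≤ r * r := by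
              have hxr : ‖x‖ ≤ r := le_of_lt (mem_ball_zero_iff.mp hx.1)
              rw [hy₀n]; exact mul_le_mul_of_nonneg_left hxr hr0.le
      have h3 : |c * (inner ℝ y₀ x : ℝ)| ≤ |c| * (r * r) := by
        rw [abs_mul]
        exact mul_le_mul_of_nonneg_left h2 (abs_nonneg c)
      have := hinner x
      have h4 := abs_le.mp h3
      simp only [hwdef]
      linarith
    have hIs' := hstar W' r hr0 hrb
    rw [csInf_of_not_bddBelow hnb', Real.sInf_empty] at hIs'
    have h0 : (0:ℝ) ≤ u y₀ + (inner ℝ W' y₀ : ℝ) := hIs'.2 ⟨y₀, hy₀, rfl⟩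
    linarith
  -- Step 1: a point near zero with small w
  have hfreq := hlim2 (ε*r/8) (by positivity)
  have hev : ∀ᶠ x in 𝓝[≠] (0 : EuclideanSpace ℝ (Fin n)),
      (x ∈ ball (0 : EuclideanSpace ℝ (Fin n)) r \ {0}) ∧ ‖x‖ < δ := by
    have h1 : ∀ᶠ x in 𝓝[≠] (0 : EuclideanSpace ℝ (Fin n)), ‖x‖ < min r δ := by
      apply eventually_nhdsWithin_of_eventually_nhds
      have : Metric.ball (0 : EuclideanSpace ℝ (Fin n)) (min r δ) ∈
          𝓝 (0 : EuclideanSpace ℝ (Fin n)) := ball_mem_nhds _ (lt_min hr0 hδ0)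
      filter_upwards [this] with x hx using mem_ball_zero_iff.mp hx
    have h2 : ∀ᶠ x in 𝓝[≠] (0 : EuclideanSpace ℝ (Fin n)),
        x ≠ (0 : EuclideanSpace ℝ (Fin n)) := eventually_mem_nhdsWithin
    filter_upwards [h1, h2] with x hx hx0
    exact ⟨⟨mem_ball_zero_iff.mpr (lt_of_lt_of_le hx (min_le_left _ _)),
      fun h => hx0 h⟩, lt_of_lt_of_le hx (min_le_right _ _)⟩
  obtain ⟨x₀, hx₀u, hx₀mem, hx₀δ⟩ := (hfreq.and_eventually hev).exists
  have hx₀r : ‖x₀‖ ≤ r := le_of_lt (mem_ball_zero_iff.mp hx₀mem.1)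
  have hφ₀ : ‖v x₀ - v 0 - f' x₀‖ ≤ ε/4 * ‖x₀‖ := hδ (by rwa [dist_zero_right])
  have hwx₀ : w x₀ < v 0 + ε*r/8 + ε/4 * r := by
    have h1 : |v x₀ - v 0 - f' x₀| ≤ ε/4 * r := by
      rw [← Real.norm_eq_abs]
      calc ‖v x₀ - v 0 - f' x₀‖ ≤ ε/4 * ‖x₀‖ := hφ₀
        _ ≤ ε/4 * r := mul_le_mul_of_nonneg_left hx₀r (by positivity)
    have h2 := abs_le.mp h1
    have h3 := hW x₀
    simp only [hwdef]
    linarith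
  have hble : sInf (w '' (ball (0 : EuclideanSpace ℝ (Fin n)) r \ {0})) ≤ w x₀ :=
    csInf_le hbdd ⟨x₀, hx₀mem, rfl⟩
  -- Step 2: the minimizer on the sphere
  obtain ⟨y, hy, hwy⟩ := hIs.1
  refine ⟨y, hy, ?_⟩
  have hyn : ‖y‖ = r := mem_sphere_zero_iff_norm.mp hy
  have hφy : |v y - v 0 - f' y| ≤ ε/4 * r := by
    rw [← Real.norm_eq_abs]
    have := @hδ y (by rw [dist_zero_right, hyn]; exact hrδ)
    rwa [hyn] at this
  have h2 := abs_le.mp hφy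
  have h3 := hW y
  have h4 : u y + (inner ℝ W y : ℝ) ≤ v 0 + ε*r/8 + ε/4 * r := by
    have : w y ≤ w x₀ := le_trans (le_of_eq hwy) hble
    simp only [hwdef] at this ⊢
    linarith [hwx₀]
  rw [hyn]
  nlinarith
end
end
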